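/- arXiv:1706.03617 — 5 statements merged into one kernel-verified Lean document; each statement's English description precedes it below -/
import Mathlib

section
/- The generating function for overpartitions satisfies the coefficient-wise congruence ∏_{n≥1} (1+q^n)/(1-q^n) ≡ 1 + 2·∑_{n≥1} q^(n^2) (mod 4). -/
open PowerSeries

/-- The formal power series `(1+q^k)/(1-q^k)` in `ℤ⟦q⟧`. -/
noncomputable def fps (k : ℕ) : PowerSeries ℤ :=
  (1 + (PowerSeries.X : PowerSeries ℤ) ^ k) *
    PowerSeries.invOfUnit (1 - (PowerSeries.X : PowerSeries ℤ) ^ k) 1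

/-- The number of overpartitions of `n`: the coefficient of `q^n` in
`∏_{k≥1} (1+q^k)/(1-q^k)`.  Since each factor with `k > n` contributes only `1`
to coefficients up to degree `n`, the product may be truncated at `k = n`. -/
noncomputable def pbar (n : ℕ) : ℤ :=
  PowerSeries.coeff n (∏ k ∈ Finset.Icc 1 n, fps k)

lemma geom_mul (R : Type*) [CommRing R] {k : ℕ} (hk : 1 ≤ k) :
    (1 - (X : PowerSeries R) ^ k) * PowerSeries.mk (fun m => if k ∣ m then (1:R) else 0) = 1 := by
  ext m
  rw [sub_mul, one_mul, map_sub, coeff_X_pow_mul']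
  rcases eq_or_ne m 0 with rfl | hm
  · have : ¬ k ≤ 0 := by omega
    simp [this]
  · simp only [coeff_mk, PowerSeries.coeff_one, if_neg hm]
    by_cases hle : k ≤ m
    · rw [if_pos hle]
      have hiff : k ∣ m ↔ k ∣ m - k := by
        constructor
        · exact fun h => Nat.dvd_sub h dvd_rfl
        · intro h
          have := Nat.dvd_add h (dvd_refl k)
          rwa [Nat.sub_add_cancel hle] at this
      rw [if_congr hiff rfl rfl, sub_self]
    · rw [if_neg hle, sub_zero, if_neg]
      intro hd
      exact hle (Nat.le_of_dvd (Nat.pos_of_ne_zero hm) hd)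

lemma fps_eq {k : ℕ} (hk : 1 ≤ k) :
    fps k = 1 + 2 * PowerSeries.mk (fun m => if k ∣ m ∧ m ≠ 0 then (1:ℤ) else 0) := by
  have hG := geom_mul ℤ hk
  set G := PowerSeries.mk (fun m => if k ∣ m then (1:ℤ) else 0) with hGdef
  have hI : (1 - (X : PowerSeries ℤ) ^ k) * PowerSeries.invOfUnit (1 - X ^ k) 1 = 1 := by
    apply PowerSeries.mul_invOfUnit
    simp [PowerSeries.constantCoeff_X, zero_pow (by omega : k ≠ 0)]
  have hIG : PowerSeries.invOfUnit (1 - (X : PowerSeries ℤ) ^ k) 1 = G := by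
    calc PowerSeries.invOfUnit (1 - (X : PowerSeries ℤ) ^ k) 1
        = PowerSeries.invOfUnit (1 - (X : PowerSeries ℤ) ^ k) 1 * ((1 - X ^ k) * G) := by
          rw [hG, mul_one]
      _ = (1 - X ^ k) * PowerSeries.invOfUnit (1 - (X : PowerSeries ℤ) ^ k) 1 * G := by ring
      _ = G := by rw [hI, one_mul]
  rw [fps, hIG]
  have h2 : (1 + (X:PowerSeries ℤ)^k) = 2 - (1 - X^k) := by ring
  rw [h2, sub_mul, hG]
  have hG1 : G - 1 = PowerSeries.mk (fun m => if k ∣ m ∧ m ≠ 0 then (1:ℤ) else 0) := by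
    ext m
    rcases eq_or_ne m 0 with rfl | hm
    · simp [hGdef]
    · simp [hGdef, PowerSeries.coeff_one, hm]
  rw [← hG1]
  ring

lemma four_eq_zero : (4 : PowerSeries (ZMod 4)) = 0 := by
  have : (4 : PowerSeries (ZMod 4)) = PowerSeries.C (4 : ZMod 4) := (map_ofNat _ 4).symm
  rw [this, show (4 : ZMod 4) = 0 from rfl, map_zero]

lemma prod_one_add_two_mul (s : Finset ℕ) (h : ℕ → PowerSeries (ZMod 4)) :
    ∏ k ∈ s, (1 + 2 * h k) = 1 + 2 * ∑ k ∈ s, h k := by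
  classical
  induction s using Finset.induction_on with
  | empty => simp
  | insert a s ha ih =>
    rw [Finset.prod_insert ha, ih, Finset.sum_insert ha]
    have : (1 + 2 * h a) * (1 + 2 * ∑ k ∈ s, h k)
        = 1 + 2 * (h a + ∑ k ∈ s, h k) + 4 * (h a * ∑ k ∈ s, h k) := by ring
    rw [this, four_eq_zero, zero_mul, add_zero]

lemma isSquare_iff_even_factorization {n : ℕ} (hn : n ≠ 0) :
    IsSquare n ↔ ∀ p, Even (n.factorization p) := by
  constructor
  · rintro ⟨m, rfl⟩ p
    have hm : m ≠ 0 := by rintro rfl; simp at hn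
    rw [Nat.factorization_mul hm hm]
    exact ⟨m.factorization p, by simp⟩
  · intro h
    refine ⟨n.factorization.prod fun p k => p ^ (k / 2), ?_⟩
    conv_lhs => rw [← Nat.factorization_prod_pow_eq_self hn]
    rw [Finsupp.prod, Finsupp.prod, ← Finset.prod_mul_distrib]
    apply Finset.prod_congr rfl
    intro p _
    rw [← pow_add]
    congr 1
    obtain ⟨c, hc⟩ := h p
    omega

lemma odd_card_divisors {n : ℕ} (hn : n ≠ 0) :
    Odd n.divisors.card ↔ IsSquare n := by
  rw [Nat.card_divisors hn, isSquare_iff_even_factorization hn]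
  constructor
  · intro h p
    by_cases hp : p ∈ n.factorization.support
    · by_contra hodd
      have h2 : 2 ∣ n.factorization p + 1 := by
        rw [← Nat.not_odd_iff_even] at hodd
        have := Nat.even_add_one.mpr (by rwa [← Nat.not_odd_iff_even])
        exact this.two_dvd
      have hdvd : n.factorization p + 1 ∣ n.factorization.prod fun _ k => k + 1 := by
        rw [Finsupp.prod]
        exact Finset.dvd_prod_of_mem _ hp
      have : 2 ∣ n.factorization.prod fun _ k => k + 1 := h2.trans hdvd
      rw [← Nat.not_even_iff_odd] at h
      exact h (even_iff_two_dvd.mpr this)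
    · rw [Finsupp.notMem_support_iff.mp hp]
      exact Even.zero
  · intro h
    exact Finset.prod_induction _ Odd (fun a b => Odd.mul) odd_one
      (fun p _ => (h p).add_one)

lemma map_fps {k : ℕ} (hk : 1 ≤ k) :
    PowerSeries.map (Int.castRingHom (ZMod 4)) (fps k)
      = 1 + 2 * PowerSeries.mk (fun m => if k ∣ m ∧ m ≠ 0 then (1 : ZMod 4) else 0) := by
  rw [fps_eq hk]
  ext m
  simp only [two_mul, PowerSeries.coeff_map, map_add, coeff_mk, PowerSeries.coeff_one]
  push_cast
  split_ifs <;> simp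

/-- `∏_{k≥1} (1+q^k)/(1-q^k) ≡ 1 + 2·∑_{m≥1} q^(m²) (mod 4)` coefficient-wise. -/
theorem overpartition_gen_congr_mod_four (n : ℕ) :
    pbar n ≡ (if n = 0 then 1 else if IsSquare n then 2 else 0) [ZMOD 4] := by
  rcases eq_or_ne n 0 with rfl | hn
  · simp [pbar]
  · rw [if_neg hn, show ((4:ℤ)) = ((4:ℕ):ℤ) by norm_num, ← ZMod.intCast_eq_intCast_iff]
    have key : ((pbar n : ℤ) : ZMod 4) = 2 * (n.divisors.card : ZMod 4) := by
      have h1 : ((pbar n : ℤ) : ZMod 4)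
          = PowerSeries.coeff n
              (PowerSeries.map (Int.castRingHom (ZMod 4)) (∏ k ∈ Finset.Icc 1 n, fps k)) := by
        rw [PowerSeries.coeff_map, pbar]
        simp
      rw [h1, map_prod]
      have h2 : ∏ k ∈ Finset.Icc 1 n, PowerSeries.map (Int.castRingHom (ZMod 4)) (fps k)
          = ∏ k ∈ Finset.Icc 1 n,
              (1 + 2 * PowerSeries.mk (fun m => if k ∣ m ∧ m ≠ 0 then (1 : ZMod 4) else 0)) := by
        apply Finset.prod_congr rfl
        intro k hk
        exact map_fps (Finset.mem_Icc.mp hk).1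
      rw [h2, prod_one_add_two_mul, two_mul, map_add, map_add,
        PowerSeries.coeff_one, if_neg hn, map_sum]
      simp only [coeff_mk, hn, ne_eq, not_false_iff, and_true]
      rw [Finset.sum_boole]
      have hfil : Finset.filter (fun k => k ∣ n) (Finset.Icc 1 n) = n.divisors := by
        ext k
        simp only [Finset.mem_filter, Finset.mem_Icc, Nat.mem_divisors]
        constructor
        · rintro ⟨_, h⟩; exact ⟨h, hn⟩
        · rintro ⟨h, _⟩
          refine ⟨⟨?_, Nat.le_of_dvd (Nat.pos_of_ne_zero hn) h⟩, h⟩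
          rcases Nat.eq_zero_or_pos k with rfl | h1
          · exact absurd (zero_dvd_iff.mp h) hn
          · exact h1
      rw [hfil]
      ring
    rw [key]
    have h4 : (4 : ZMod 4) = 0 := rfl
    by_cases hs : IsSquare n
    · rw [if_pos hs]
      obtain ⟨c, hc⟩ := (odd_card_divisors hn).mpr hs
      rw [hc]
      push_cast
      linear_combination (c : ZMod 4) * h4
    · rw [if_neg hs]
      have hev : Even n.divisors.card :=
        Nat.not_odd_iff_even.mp (fun h => hs ((odd_card_divisors hn).mp h))
      obtain ⟨c, hc⟩ := hev
      rw [hc]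
      push_cast
      linear_combination (c : ZMod 4) * h4
end

section
/- For all integers n ≥ 0, p̄(4n+3) ≡ 0 (mod 8). -/
open PowerSeries

set_option linter.unreachableTactic false
set_option linter.unusedTactic false

namespace OP

/-- coefficientwise agreement up to index N -/
def EqUpTo {R : Type*} [Semiring R] (N : ℕ) (f g : PowerSeries R) : Prop :=
  ∀ m : ℕ, m ≤ N → PowerSeries.coeff m f = PowerSeries.coeff m g

theorem EqUpTo.refl {R : Type*} [Semiring R] {N : ℕ} (f : PowerSeries R) : EqUpTo N f f :=
  fun _ _ => rfl

theorem EqUpTo.symm {R : Type*} [Semiring R] {N : ℕ} {f g : PowerSeries R}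
    (h : EqUpTo N f g) : EqUpTo N g f := fun m hm => (h m hm).symm

theorem EqUpTo.trans {R : Type*} [Semiring R] {N : ℕ} {f g h : PowerSeries R}
    (h1 : EqUpTo N f g) (h2 : EqUpTo N g h) : EqUpTo N f h :=
  fun m hm => (h1 m hm).trans (h2 m hm)

theorem EqUpTo.mul {R : Type*} [CommSemiring R] {N : ℕ} {f g f' g' : PowerSeries R}
    (hf : EqUpTo N f f') (hg : EqUpTo N g g') : EqUpTo N (f * g) (f' * g') := by
  intro m hm
  rw [PowerSeries.coeff_mul, PowerSeries.coeff_mul]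
  apply Finset.sum_congr rfl
  rintro ⟨a, b⟩ hab
  rw [Finset.HasAntidiagonal.mem_antidiagonal] at hab
  rw [hf a (le_trans (by omega) hm), hg b (le_trans (by omega) hm)]

theorem EqUpTo.prod {R : Type*} [CommSemiring R] {N : ℕ} {ι : Type*} (s : Finset ι)
    (f f' : ι → PowerSeries R) (h : ∀ i ∈ s, EqUpTo N (f i) (f' i)) :
    EqUpTo N (∏ i ∈ s, f i) (∏ i ∈ s, f' i) := by
  classical
  induction s using Finset.induction with
  | empty => simpa using EqUpTo.refl 1
  | insert a s hx ih =>
      rw [Finset.prod_insert hx, Finset.prod_insert hx]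
      exact (h a (Finset.mem_insert_self a s)).mul
        (ih fun i hi => h i (Finset.mem_insert_of_mem hi))


theorem constCoeff_one_add {d : ℤ} {k : ℕ} (hk : 1 ≤ k) :
    PowerSeries.constantCoeff (1 + PowerSeries.C d * X ^ k) = 1 := by
  have : (PowerSeries.constantCoeff) (X ^ k : PowerSeries ℤ) = 0 := by
    rw [map_pow, constantCoeff_X, zero_pow (by omega)]
  simp [this]

/-- inverse of `1 + d X^k`, as invOfUnit -/
noncomputable def invf (d : ℤ) (k : ℕ) : PowerSeries ℤ :=
  PowerSeries.invOfUnit (1 + PowerSeries.C d * X ^ k) 1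

theorem invf_spec {d : ℤ} {k : ℕ} (hk : 1 ≤ k) :
    (1 + PowerSeries.C d * X ^ k) * invf d k = 1 :=
  PowerSeries.mul_invOfUnit _ 1 (by rw [constCoeff_one_add hk]; rfl)

theorem inv_unique {R : Type*} [CommRing R] {f b c : PowerSeries R}
    (hb : f * b = 1) (hc : f * c = 1) : b = c := by
  calc b = b * (f * c) := by rw [hc, mul_one]
    _ = c * (f * b) := by ring
    _ = c := by rw [hb, mul_one]

/-- coefficients of the inverse of 1 + d X^k agree with 1 below k -/
theorem EqUpTo_invf_one {d : ℤ} {k N : ℕ} (hk : 1 ≤ k) (hN : N < k) :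
    EqUpTo N (invf d k) 1 := by
  intro m hm
  have h := invf_spec (d := d) hk
  have := congrArg (PowerSeries.coeff m) h
  rw [add_mul, one_mul, mul_assoc, map_add] at this
  have hz : (PowerSeries.coeff m) (PowerSeries.C d * (X ^ k * invf d k)) = 0 := by
    rw [PowerSeries.coeff_C_mul, PowerSeries.coeff_X_pow_mul', if_neg (by omega), mul_zero]
  rw [hz, add_zero] at this
  rw [this]

def sgn (j : ℤ) : ℤ := if Even j then 1 else -1

lemma sgn_add_one (j : ℤ) : sgn (j + 1) = -sgn j := by
  unfold sgn
  by_cases h : Even j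
  · rw [if_pos h, if_neg (by simpa [Int.even_add_one] using h)]
  · rw [if_neg h, if_pos (Int.even_add_one.mpr h)]; ring

lemma sgn_sub_one (j : ℤ) : sgn (j - 1) = -sgn j := by
  have := sgn_add_one (j - 1); rw [sub_add_cancel] at this; omega

lemma sgn_neg (j : ℤ) : sgn (-j) = sgn j := by simp [sgn]

lemma sgn_zero : sgn 0 = 1 := rfl

noncomputable def gb2 : ℕ → ℤ → Polynomial ℤ
  | 0, k => if k = 0 then 1 else 0
  | (n+1), k => gb2 n k + Polynomial.X ^ (2 * ((n : ℤ) + 1 - k)).toNat * gb2 n (k - 1)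

lemma gb2_succ (n : ℕ) (k : ℤ) :
    gb2 (n + 1) k = gb2 n k + Polynomial.X ^ (2 * ((n : ℤ) + 1 - k)).toNat * gb2 n (k - 1) :=
  rfl

lemma gb2_neg : ∀ (n : ℕ) (k : ℤ), k < 0 → gb2 n k = 0 := by
  intro n
  induction n with
  | zero => intro k hk; simp [gb2]; omega
  | succ n ih =>
      intro k hk
      rw [gb2_succ, ih k hk, ih (k - 1) (by omega), mul_zero, add_zero]

lemma gb2_gt : ∀ (n : ℕ) (k : ℤ), (n : ℤ) < k → gb2 n k = 0 := by
  intro n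
  induction n with
  | zero => intro k hk; simp [gb2]; omega
  | succ n ih =>
      intro k hk
      push_cast at hk
      rw [gb2_succ, ih k (by omega), ih (k - 1) (by omega)]
      simp

lemma gb2_zero (n : ℕ) : gb2 n 0 = 1 := by
  induction n with
  | zero => simp [gb2]
  | succ n ih => rw [gb2_succ, ih, gb2_neg n (0 - 1) (by omega), mul_zero, add_zero]

lemma gb2_self (n : ℕ) : gb2 n (n : ℤ) = 1 := by
  induction n with
  | zero => simp [gb2]
  | succ n ih =>
      have h1 : ((n + 1 : ℕ) : ℤ) = (n : ℤ) + 1 := by push_cast; ring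
      rw [h1, gb2_succ, gb2_gt n ((n : ℤ) + 1) (by omega), zero_add]
      have h2 : (2 * ((n : ℤ) + 1 - ((n : ℤ) + 1))).toNat = 0 := by omega
      rw [h2, show (n : ℤ) + 1 - 1 = (n : ℤ) by ring, ih, pow_zero, one_mul]

lemma gb2_pascalB : ∀ (n : ℕ) (k : ℤ),
    gb2 (n + 1) k = Polynomial.X ^ (2 * k).toNat * gb2 n k + gb2 n (k - 1) := by
  intro n
  induction n with
  | zero =>
      intro k
      by_cases h0 : k = 0
      · subst h0; simp [gb2]
      by_cases h1 : k = 1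
      · subst h1; norm_num [gb2_succ]; simp [gb2]
      · rw [gb2_succ]
        simp only [gb2, if_neg h0, if_neg h1, if_neg (show ¬ k - 1 = 0 by omega)]
        ring
  | succ n ih =>
      intro k
      have e1 : gb2 (n + 1 + 1) k = gb2 (n + 1) k
          + Polynomial.X ^ (2 * ((n : ℤ) + 2 - k)).toNat * gb2 (n + 1) (k - 1) := by
        rw [gb2_succ (n + 1) k,
          show ((n + 1 : ℕ) : ℤ) + 1 - k = ((n : ℤ) + 2 - k) by push_cast; ring]
      calc gb2 (n + 1 + 1) k
          = (Polynomial.X ^ (2 * k).toNat * gb2 n k + gb2 n (k - 1))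
            + Polynomial.X ^ (2 * ((n : ℤ) + 2 - k)).toNat *
              (Polynomial.X ^ (2 * (k - 1)).toNat * gb2 n (k - 1) + gb2 n (k - 1 - 1)) := by
            rw [e1, ih k, ih (k - 1)]
        _ = Polynomial.X ^ (2 * k).toNat *
              (gb2 n k + Polynomial.X ^ (2 * ((n : ℤ) + 1 - k)).toNat * gb2 n (k - 1))
            + (gb2 n (k - 1) + Polynomial.X ^ (2 * ((n : ℤ) + 1 - (k - 1))).toNat * gb2 n (k - 1 - 1)) := by
            have key : Polynomial.X ^ (2 * ((n : ℤ) + 2 - k)).toNat * (Polynomial.X ^ (2 * (k - 1)).toNat * gb2 n (k - 1))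
                = Polynomial.X ^ (2 * k).toNat * (Polynomial.X ^ (2 * ((n : ℤ) + 1 - k)).toNat * gb2 n (k - 1)) := by
              by_cases hk1 : 1 ≤ k ∧ k ≤ (n : ℤ) + 1
              · rw [← mul_assoc, ← mul_assoc, ← pow_add, ← pow_add]
                congr 2
                omega
              · rcases (not_and_or.mp hk1) with h | h
                · rw [gb2_neg n (k - 1) (by omega)]; ring
                · rw [gb2_gt n (k - 1) (by omega)]; ring
            have e2 : (2 * ((n : ℤ) + 1 - (k - 1))).toNat = (2 * ((n : ℤ) + 2 - k)).toNat := by omega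
            rw [e2]
            linear_combination key
        _ = Polynomial.X ^ (2 * k).toNat * gb2 (n + 1) k + gb2 (n + 1) (k - 1) := by
            rw [gb2_succ n k, gb2_succ n (k - 1)]

lemma gb2_symm : ∀ (n : ℕ) (k : ℤ), gb2 n k = gb2 n ((n : ℤ) - k) := by
  intro n
  induction n with
  | zero => intro k; by_cases h : k = 0 <;> simp [gb2, h] <;> omega
  | succ n ih =>
      intro k
      rw [show ((n + 1 : ℕ) : ℤ) = (n : ℤ) + 1 by push_cast; ring,
        gb2_succ n k, gb2_pascalB n ((n : ℤ) + 1 - k)]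
      rw [ih k, ih (k - 1)]
      rw [show (n : ℤ) - (k - 1) = (n : ℤ) + 1 - k by ring,
        show (n : ℤ) + 1 - k - 1 = (n : ℤ) - k by ring]
      ring

lemma gb2_key3' (t : ℕ) (m : ℤ) :
    gb2 (2 * t + 2) m
      = (1 + Polynomial.X ^ (2 * (2 * t + 1))) * gb2 (2 * t) (m - 1)
        + Polynomial.X ^ (2 * (2 * (t : ℤ) + 2 - m)).toNat * gb2 (2 * t) (m - 1 - 1)
        + Polynomial.X ^ (2 * m).toNat * gb2 (2 * t) m := by
  have e1 : gb2 (2 * t + 2) m = gb2 (2 * t + 1) m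
      + Polynomial.X ^ (2 * (2 * (t : ℤ) + 2 - m)).toNat * gb2 (2 * t + 1) (m - 1) := by
    rw [gb2_succ (2 * t + 1) m,
      show ((2 * t + 1 : ℕ) : ℤ) + 1 - m = 2 * (t : ℤ) + 2 - m by push_cast; ring]
  rw [e1, gb2_pascalB (2 * t) m, gb2_pascalB (2 * t) (m - 1)]
  have key : Polynomial.X ^ (2 * (2 * (t : ℤ) + 2 - m)).toNat *
        (Polynomial.X ^ (2 * (m - 1)).toNat * gb2 (2 * t) (m - 1))
      = Polynomial.X ^ (2 * (2 * t + 1)) * gb2 (2 * t) (m - 1) := by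
    by_cases hr : 1 ≤ m ∧ m ≤ 2 * (t : ℤ) + 1
    · rw [← mul_assoc, ← pow_add]
      congr 2
      omega
    · rcases (not_and_or.mp hr) with h | h
      · rw [gb2_neg (2 * t) (m - 1) (by omega)]; ring
      · rw [gb2_gt (2 * t) (m - 1) (by push_cast; omega)]; ring
  rw [mul_add, key]
  ring

lemma gb2_key3 (t : ℕ) (j : ℤ) :
    gb2 (2 * t + 2) ((t : ℤ) + 1 + j)
      = (1 + Polynomial.X ^ (2 * (2 * t + 1))) * gb2 (2 * t) ((t : ℤ) + j)
        + Polynomial.X ^ (2 * ((t : ℤ) + 1 - j)).toNat * gb2 (2 * t) ((t : ℤ) + j - 1)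
        + Polynomial.X ^ (2 * ((t : ℤ) + 1 + j)).toNat * gb2 (2 * t) ((t : ℤ) + j + 1) := by
  have h := gb2_key3' t ((t : ℤ) + 1 + j)
  rw [show (t : ℤ) + 1 + j - 1 = (t : ℤ) + j by ring] at h
  rw [show (2 * (2 * (t : ℤ) + 2 - ((t : ℤ) + 1 + j))).toNat
      = (2 * ((t : ℤ) + 1 - j)).toNat by omega] at h
  rw [h, show (t : ℤ) + j + 1 = (t : ℤ) + 1 + j by ring]


/-- The theta-side sum in the finite Jacobi triple product at `z = -1`. -/
noncomputable def Jt (t : ℕ) : Polynomial ℤ :=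
  ∑ j ∈ Finset.Icc (-(t : ℤ)) (t : ℤ),
    Polynomial.C (sgn j) * gb2 (2 * t) ((t : ℤ) + j) * Polynomial.X ^ (j ^ 2).toNat

lemma jtp : ∀ t : ℕ, Jt t = ∏ k ∈ Finset.Icc 1 t, (1 - Polynomial.X ^ (2 * k - 1)) ^ 2 := by
  intro t
  induction t with
  | zero => simp [Jt, sgn, gb2]
  | succ t ih =>
      rw [Finset.prod_Icc_succ_top (by omega : 1 ≤ t + 1), ← ih]
      have step0 : Jt (t + 1) = ∑ j ∈ Finset.Icc (-((t : ℤ) + 1)) ((t : ℤ) + 1),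
          Polynomial.C (sgn j) * gb2 (2 * t + 2) ((t : ℤ) + 1 + j) * Polynomial.X ^ (j ^ 2).toNat := by
        unfold Jt
        rw [show ((t + 1 : ℕ) : ℤ) = (t : ℤ) + 1 by push_cast; ring,
          show 2 * (t + 1) = 2 * t + 2 by ring]
      have step1 : ∀ j ∈ Finset.Icc (-((t : ℤ) + 1)) ((t : ℤ) + 1),
          Polynomial.C (sgn j) * gb2 (2 * t + 2) ((t : ℤ) + 1 + j) * Polynomial.X ^ (j ^ 2).toNat
          = (1 + Polynomial.X ^ (2 * (2 * t + 1)))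
              * (Polynomial.C (sgn j) * gb2 (2 * t) ((t : ℤ) + j) * Polynomial.X ^ (j ^ 2).toNat)
            + Polynomial.C (sgn j) * (Polynomial.X ^ (2 * ((t : ℤ) + 1 - j)).toNat
                * gb2 (2 * t) ((t : ℤ) + j - 1)) * Polynomial.X ^ (j ^ 2).toNat
            + Polynomial.C (sgn j) * (Polynomial.X ^ (2 * ((t : ℤ) + 1 + j)).toNat
                * gb2 (2 * t) ((t : ℤ) + j + 1)) * Polynomial.X ^ (j ^ 2).toNat := by
        intro j _
        rw [gb2_key3]
        ring
      rw [step0, Finset.sum_congr rfl step1, Finset.sum_add_distrib, Finset.sum_add_distrib]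
      -- Σ1
      have hS1 : (∑ j ∈ Finset.Icc (-((t : ℤ) + 1)) ((t : ℤ) + 1),
          (1 + Polynomial.X ^ (2 * (2 * t + 1)))
            * (Polynomial.C (sgn j) * gb2 (2 * t) ((t : ℤ) + j) * Polynomial.X ^ (j ^ 2).toNat))
          = (1 + Polynomial.X ^ (2 * (2 * t + 1))) * Jt t := by
        rw [← Finset.mul_sum]
        congr 1
        unfold Jt
        apply (Finset.sum_subset (Finset.Icc_subset_Icc (by omega) (by omega)) ?_).symm
        intro j hj hnj
        rw [Finset.mem_Icc] at hj
        rw [Finset.mem_Icc] at hnj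
        push_neg at hnj
        rcases (by omega : j < -(t : ℤ) ∨ (t : ℤ) < j) with h | h
        · rw [gb2_neg (2 * t) ((t : ℤ) + j) (by omega)]; ring
        · rw [gb2_gt (2 * t) ((t : ℤ) + j) (by push_cast; omega)]; ring
      -- Σ2
      have hS2 : (∑ j ∈ Finset.Icc (-((t : ℤ) + 1)) ((t : ℤ) + 1),
          Polynomial.C (sgn j) * (Polynomial.X ^ (2 * ((t : ℤ) + 1 - j)).toNat
            * gb2 (2 * t) ((t : ℤ) + j - 1)) * Polynomial.X ^ (j ^ 2).toNat)
          = -(Polynomial.X ^ (2 * t + 1) * Jt t) := by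
        rw [← Finset.sum_subset (Finset.Icc_subset_Icc (by omega : -(t:ℤ) + 1 ≥ -((t:ℤ)+1)) (le_refl ((t:ℤ)+1))) ?hz]
        case hz =>
          intro j hj hnj
          rw [Finset.mem_Icc] at hj
          rw [Finset.mem_Icc] at hnj
          push_neg at hnj
          rw [gb2_neg (2 * t) ((t : ℤ) + j - 1) (by omega)]
          ring
        have hmap : Finset.Icc (-(t:ℤ) + 1) ((t:ℤ) + 1)
            = (Finset.Icc (-(t:ℤ)) (t:ℤ)).map (addRightEmbedding 1) := by
          rw [Finset.map_add_right_Icc]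
        rw [hmap, Finset.sum_map]
        unfold Jt
        rw [Finset.mul_sum, ← Finset.sum_neg_distrib]
        apply Finset.sum_congr rfl
        intro i hi
        rw [Finset.mem_Icc] at hi
        simp only [addRightEmbedding_apply]
        rw [sgn_add_one, show (t : ℤ) + (i + 1) - 1 = (t : ℤ) + i by ring, map_neg]
        have hx : Polynomial.X ^ (2 * ((t : ℤ) + 1 - (i + 1))).toNat
              * (Polynomial.X : Polynomial ℤ) ^ ((i + 1) ^ 2).toNat
            = Polynomial.X ^ (2 * t + 1) * Polynomial.X ^ (i ^ 2).toNat := by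
          rw [← pow_add, ← pow_add]
          congr 1
          have h3 : (0 : ℤ) ≤ i ^ 2 := sq_nonneg i
          have h4 : (0 : ℤ) ≤ i ^ 2 + 2 * i + 1 := by nlinarith [sq_nonneg (i + 1)]
          rw [show ((i + 1) ^ 2 : ℤ) = i ^ 2 + 2 * i + 1 by ring]
          generalize (i ^ 2 : ℤ) = a at h3 h4 ⊢
          omega
        linear_combination (-(gb2 (2 * t) ((t : ℤ) + i)) * Polynomial.C (sgn i)) * hx
      -- Σ3
      have hS3 : (∑ j ∈ Finset.Icc (-((t : ℤ) + 1)) ((t : ℤ) + 1),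
          Polynomial.C (sgn j) * (Polynomial.X ^ (2 * ((t : ℤ) + 1 + j)).toNat
            * gb2 (2 * t) ((t : ℤ) + j + 1)) * Polynomial.X ^ (j ^ 2).toNat)
          = -(Polynomial.X ^ (2 * t + 1) * Jt t) := by
        rw [← Finset.sum_subset (Finset.Icc_subset_Icc (le_refl (-((t:ℤ)+1))) (by omega : (t:ℤ) - 1 ≤ (t:ℤ)+1)) ?hz]
        case hz =>
          intro j hj hnj
          rw [Finset.mem_Icc] at hj
          rw [Finset.mem_Icc] at hnj
          push_neg at hnj
          rw [gb2_gt (2 * t) ((t : ℤ) + j + 1) (by push_cast; omega)]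
          ring
        have hmap : Finset.Icc (-(t:ℤ) - 1) ((t:ℤ) - 1)
            = (Finset.Icc (-(t:ℤ)) (t:ℤ)).map (addRightEmbedding (-1)) := by
          rw [Finset.map_add_right_Icc]
          congr 1 <;> ring
        rw [show -((t:ℤ)+1) = -(t:ℤ) - 1 by ring, hmap, Finset.sum_map]
        unfold Jt
        rw [Finset.mul_sum, ← Finset.sum_neg_distrib]
        apply Finset.sum_congr rfl
        intro i hi
        rw [Finset.mem_Icc] at hi
        simp only [addRightEmbedding_apply]
        rw [show i + (-1 : ℤ) = i - 1 by ring, sgn_sub_one,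
          show (t : ℤ) + (i - 1) + 1 = (t : ℤ) + i by ring, map_neg]
        have hx : Polynomial.X ^ (2 * ((t : ℤ) + 1 + (i - 1))).toNat
              * (Polynomial.X : Polynomial ℤ) ^ ((i - 1) ^ 2).toNat
            = Polynomial.X ^ (2 * t + 1) * Polynomial.X ^ (i ^ 2).toNat := by
          rw [← pow_add, ← pow_add]
          congr 1
          have h3 : (0 : ℤ) ≤ i ^ 2 := sq_nonneg i
          have h4 : (0 : ℤ) ≤ i ^ 2 - 2 * i + 1 := by nlinarith [sq_nonneg (i - 1)]
          rw [show ((i - 1) ^ 2 : ℤ) = i ^ 2 - 2 * i + 1 by ring]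
          generalize (i ^ 2 : ℤ) = a at h3 h4 ⊢
          omega
        linear_combination (-(gb2 (2 * t) ((t : ℤ) + i)) * Polynomial.C (sgn i)) * hx
      rw [hS1, hS2, hS3, show 2 * (t + 1) - 1 = 2 * t + 1 by omega]
      have hsq : (Polynomial.X : Polynomial ℤ) ^ (2 * (2 * t + 1))
          = (Polynomial.X ^ (2 * t + 1)) ^ 2 := by
        rw [← pow_mul]
        congr 1
        ring
      rw [hsq]
      ring

/-- `∏_{k=1}^a (1 - X^{2k})`. -/
noncomputable def Pp (a : ℕ) : Polynomial ℤ :=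
  ∏ k ∈ Finset.Icc 1 a, (1 - Polynomial.X ^ (2 * k))

lemma Pp_succ (a : ℕ) : Pp (a + 1) = Pp a * (1 - Polynomial.X ^ (2 * (a + 1))) :=
  Finset.prod_Icc_succ_top (by omega) _

lemma Pp_coeff_low : ∀ (a m : ℕ), m ≤ 1 → (Pp a).coeff m = if m = 0 then 1 else 0 := by
  intro a
  induction a with
  | zero =>
      intro m hm
      interval_cases m <;> simp [Pp, Polynomial.coeff_one]
  | succ a ih =>
      intro m hm
      rw [Pp_succ]
      interval_cases m
      · rw [Polynomial.mul_coeff_zero, ih 0 (by omega)]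
        simp
      · rw [Polynomial.coeff_mul]
        rw [show (Finset.HasAntidiagonal.antidiagonal 1 : Finset (ℕ × ℕ)) = {(0,1),(1,0)} from rfl]
        rw [Finset.sum_insert (by decide), Finset.sum_singleton]
        rw [ih 0 (by omega), ih 1 (by omega)]
        simp [Polynomial.coeff_one, Polynomial.coeff_X_pow]
        omega

lemma boxU : ∀ (a b m : ℕ), m ≤ 2 * b + 1 →
    (gb2 (a + b) (a : ℤ) * Pp a).coeff m = if m = 0 then 1 else 0 := by
  intro a
  induction a with
  | zero =>
      intro b m hm
      rw [show ((0 : ℕ) : ℤ) = 0 from rfl, gb2_zero, one_mul,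
        show Pp 0 = 1 from rfl, Polynomial.coeff_one]
  | succ a iha =>
      intro b
      induction b with
      | zero =>
          intro m hm
          rw [gb2_self, one_mul]
          exact Pp_coeff_low (a + 1) m (by omega)
      | succ b ihb =>
          intro m hm
          have hsplit : gb2 (a + 1 + (b + 1)) ((a + 1 : ℕ) : ℤ)
              = Polynomial.X ^ (2 * (a + 1)) * gb2 (a + 1 + b) ((a + 1 : ℕ) : ℤ)
                + gb2 (a + 1 + b) ((a : ℕ) : ℤ) := by
            have h := gb2_pascalB (a + 1 + b) ((a + 1 : ℕ) : ℤ)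
            rw [show ((a + 1 : ℕ) : ℤ) - 1 = ((a : ℕ) : ℤ) by push_cast; ring,
              show (2 * ((a + 1 : ℕ) : ℤ)).toNat = 2 * (a + 1) by push_cast; omega] at h
            rw [show a + 1 + (b + 1) = a + 1 + b + 1 from rfl, h]
          have hGrec : gb2 (a + 1 + (b + 1)) ((a + 1 : ℕ) : ℤ) * Pp (a + 1)
              = (gb2 (a + 1 + b) ((a + 1 : ℕ) : ℤ) * Pp (a + 1)) * Polynomial.X ^ (2 * (a + 1))
                + ((gb2 (a + (b + 1)) ((a : ℕ) : ℤ) * Pp a)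
                    - (gb2 (a + (b + 1)) ((a : ℕ) : ℤ) * Pp a) * Polynomial.X ^ (2 * (a + 1))) := by
            rw [hsplit, show a + (b + 1) = a + 1 + b by omega]
            rw [Pp_succ a]
            ring
          rw [hGrec, Polynomial.coeff_add, Polynomial.coeff_sub,
            Polynomial.coeff_mul_X_pow', Polynomial.coeff_mul_X_pow']
          by_cases hle : 2 * (a + 1) ≤ m
          · rw [if_pos hle, if_pos hle,
              ihb (m - 2 * (a + 1)) (by omega),
              iha (b + 1) (m - 2 * (a + 1)) (by omega),
              iha (b + 1) m (by omega)]
            have : ¬ (m = 0) := by omega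
            split_ifs <;> ring
          · rw [if_neg hle, if_neg hle, iha (b + 1) m (by omega)]
            ring

section PS
open PowerSeries

local notation "Xz" => (PowerSeries.X : PowerSeries ℤ)

lemma one_subX (k : ℕ) : (1 - Xz ^ k) = 1 + PowerSeries.C (-1) * Xz ^ k := by
  rw [map_neg, map_one]; ring

lemma one_addX (k : ℕ) : (1 + Xz ^ k) = 1 + PowerSeries.C 1 * Xz ^ k := by
  rw [map_one, one_mul]

lemma addX_mul_invf {k : ℕ} (hk : 1 ≤ k) : (1 + Xz ^ k) * invf 1 k = 1 := by
  rw [one_addX]; exact invf_spec hk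

lemma subX_mul_invf {k : ℕ} (hk : 1 ≤ k) : (1 - Xz ^ k) * invf (-1) k = 1 := by
  rw [one_subX]; exact invf_spec hk

lemma fps_eq (k : ℕ) : fps k = (1 + Xz ^ k) * invf (-1) k := by
  unfold fps invf
  rw [one_subX]

lemma sq_expand (k : ℕ) : (1 + Xz ^ k) * (1 - Xz ^ k) = 1 - Xz ^ (2 * k) := by
  have h : Xz ^ (2 * k) = Xz ^ k * Xz ^ k := by rw [two_mul, pow_add]
  rw [h]; ring

lemma invf_split {k : ℕ} (hk : 1 ≤ k) :
    invf 1 k = (1 - Xz ^ k) * invf (-1) (2 * k) := by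
  apply inv_unique (f := 1 + Xz ^ k) (addX_mul_invf hk)
  rw [← mul_assoc, sq_expand]
  exact subX_mul_invf (by omega)

/-- one factor of the reciprocal product `(1-q^k)/(1+q^k)` -/
noncomputable def Gfac (k : ℕ) : PowerSeries ℤ := (1 - Xz ^ k) * invf 1 k

noncomputable def Gs (s : ℕ) : PowerSeries ℤ := ∏ k ∈ Finset.Icc 1 s, Gfac k

lemma fps_mul_Gfac {k : ℕ} (hk : 1 ≤ k) : fps k * Gfac k = 1 := by
  rw [fps_eq, Gfac]
  calc (1 + Xz ^ k) * invf (-1) k * ((1 - Xz ^ k) * invf 1 k)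
      = ((1 + Xz ^ k) * invf 1 k) * ((1 - Xz ^ k) * invf (-1) k) := by ring
    _ = 1 := by rw [addX_mul_invf hk, subX_mul_invf hk, one_mul]

lemma prod_oddeven (f : ℕ → PowerSeries ℤ) :
    ∀ t : ℕ, ∏ k ∈ Finset.Icc 1 (2 * t), f k
      = (∏ k ∈ Finset.Icc 1 t, f (2 * k - 1)) * ∏ k ∈ Finset.Icc 1 t, f (2 * k) := by
  intro t
  induction t with
  | zero => simp
  | succ t ih =>
      rw [show 2 * (t + 1) = 2 * t + 1 + 1 by ring,
        Finset.prod_Icc_succ_top (by omega : 1 ≤ 2 * t + 1 + 1),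
        Finset.prod_Icc_succ_top (by omega : 1 ≤ 2 * t + 1), ih,
        Finset.prod_Icc_succ_top (by omega : 1 ≤ t + 1),
        Finset.prod_Icc_succ_top (by omega : 1 ≤ t + 1),
        show 2 * (t + 1) - 1 = 2 * t + 1 by omega,
        show 2 * (t + 1) = 2 * t + 1 + 1 by ring]
      ring

lemma Gs_eq (t : ℕ) :
    Gs (2 * t) = ((∏ k ∈ Finset.Icc 1 t, (1 - Xz ^ (2 * k - 1)) ^ 2)
        * ∏ k ∈ Finset.Icc 1 t, (1 - Xz ^ (2 * k)))
      * ∏ k ∈ Finset.Ioc t (2 * t), invf (-1) (2 * k) := by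
  have step1 : Gs (2 * t)
      = (∏ k ∈ Finset.Icc 1 (2 * t), (1 - Xz ^ k) ^ 2)
        * ∏ k ∈ Finset.Icc 1 (2 * t), invf (-1) (2 * k) := by
    rw [Gs, ← Finset.prod_mul_distrib]
    apply Finset.prod_congr rfl
    intro k hk
    rw [Finset.mem_Icc] at hk
    rw [Gfac, invf_split (by omega)]
    ring
  have step2 : ∏ k ∈ Finset.Icc 1 (2 * t), invf (-1) (2 * k)
      = (∏ k ∈ Finset.Icc 1 t, invf (-1) (2 * k))
        * ∏ k ∈ Finset.Ioc t (2 * t), invf (-1) (2 * k) := by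
    rw [show Finset.Icc 1 (2 * t) = Finset.Ioc 0 (2 * t) from Finset.Icc_succ_left_eq_Ioc _ _, show Finset.Icc 1 (t) = Finset.Ioc 0 (t) from Finset.Icc_succ_left_eq_Ioc _ _,
      Finset.prod_Ioc_consecutive _ (by omega : 0 ≤ t) (by omega : t ≤ 2 * t)]
  have step3 : (∏ k ∈ Finset.Icc 1 t, (1 - Xz ^ (2 * k)) ^ 2)
      * ∏ k ∈ Finset.Icc 1 t, invf (-1) (2 * k)
      = ∏ k ∈ Finset.Icc 1 t, (1 - Xz ^ (2 * k)) := by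
    rw [← Finset.prod_mul_distrib]
    apply Finset.prod_congr rfl
    intro k hk
    rw [Finset.mem_Icc] at hk
    have h := subX_mul_invf (k := 2 * k) (by omega)
    calc (1 - Xz ^ (2 * k)) ^ 2 * invf (-1) (2 * k)
        = (1 - Xz ^ (2 * k)) * ((1 - Xz ^ (2 * k)) * invf (-1) (2 * k)) := by ring
      _ = 1 - Xz ^ (2 * k) := by rw [h, mul_one]
  rw [step1, prod_oddeven (fun k => (1 - Xz ^ k) ^ 2) t, step2]
  calc (∏ k ∈ Finset.Icc 1 t, (1 - Xz ^ (2 * k - 1)) ^ 2)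
        * (∏ k ∈ Finset.Icc 1 t, (1 - Xz ^ (2 * k)) ^ 2)
        * ((∏ k ∈ Finset.Icc 1 t, invf (-1) (2 * k))
          * ∏ k ∈ Finset.Ioc t (2 * t), invf (-1) (2 * k))
      = (∏ k ∈ Finset.Icc 1 t, (1 - Xz ^ (2 * k - 1)) ^ 2)
        * ((∏ k ∈ Finset.Icc 1 t, (1 - Xz ^ (2 * k)) ^ 2)
          * ∏ k ∈ Finset.Icc 1 t, invf (-1) (2 * k))
        * ∏ k ∈ Finset.Ioc t (2 * t), invf (-1) (2 * k) := by ring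
    _ = _ := by rw [step3]

end PS

section Theta
open PowerSeries

lemma toNat_sq (j : ℤ) : (j ^ 2).toNat = j.natAbs ^ 2 := by
  have h : (j ^ 2 : ℤ) = ((j.natAbs ^ 2 : ℕ) : ℤ) := by
    push_cast
    rw [sq, sq, ← Int.natAbs_mul_self']
    push_cast
    ring
  rw [h, Int.toNat_natCast]

/-- delta-coefficient products -/
lemma coeff_mul_delta {p q : Polynomial ℤ} {N : ℕ}
    (hp : ∀ m ≤ N, p.coeff m = if m = 0 then 1 else 0)
    (hq : ∀ m ≤ N, q.coeff m = if m = 0 then 1 else 0) :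
    ∀ m ≤ N, (p * q).coeff m = if m = 0 then 1 else 0 := by
  intro m hm
  rw [Polynomial.coeff_mul, Finset.sum_eq_single (0, m)]
  · rw [hp 0 (by omega), hq m hm]; simp
  · rintro ⟨a, b⟩ hab hne
    rw [Finset.HasAntidiagonal.mem_antidiagonal] at hab
    have ha : a ≠ 0 := by
      rintro rfl
      exact hne (by simp at hab ⊢; omega)
    rw [hp a (by omega), if_neg ha, zero_mul]
  · intro h
    exact absurd (Finset.HasAntidiagonal.mem_antidiagonal.mpr (by simp)) h

lemma coeff_prod_delta {ι : Type*} (s : Finset ι) (f : ι → Polynomial ℤ) {N : ℕ}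
    (h : ∀ i ∈ s, ∀ m ≤ N, (f i).coeff m = if m = 0 then 1 else 0) :
    ∀ m ≤ N, (∏ i ∈ s, f i).coeff m = if m = 0 then 1 else 0 := by
  classical
  induction s using Finset.induction with
  | empty => intro m hm; simp [Polynomial.coeff_one]
  | insert a s hx ih =>
      rw [Finset.prod_insert hx]
      exact coeff_mul_delta (h a (Finset.mem_insert_self a s))
        (ih fun i hi => h i (Finset.mem_insert_of_mem hi))

lemma coeff_one_sub_Xpow (r m : ℕ) (hm : m < r) :
    ((1 : Polynomial ℤ) - Polynomial.X ^ r).coeff m = if m = 0 then 1 else 0 := by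
  simp only [Polynomial.coeff_sub, Polynomial.coeff_one, Polynomial.coeff_X_pow]
  rw [if_neg (by omega : ¬ m = r), sub_zero]

lemma thetaA_term (t : ℕ) (j : ℤ) (hj : j ∈ Finset.Icc (-(t : ℤ)) (t : ℤ))
    (m : ℕ) (hm : m ≤ 2 * t) :
    (Polynomial.C (sgn j) * gb2 (2 * t) ((t : ℤ) + j) * Polynomial.X ^ (j ^ 2).toNat
        * Pp t).coeff m
      = if m = (j ^ 2).toNat then sgn j else 0 := by
  rw [Finset.mem_Icc] at hj
  set u := j.natAbs with hu
  have hut : u ≤ t := by omega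
  have hgb : gb2 (2 * t) ((t : ℤ) + j) = gb2 (2 * t) (((t - u : ℕ) : ℤ)) := by
    rcases le_or_gt 0 j with h | h
    · rw [gb2_symm (2 * t) ((t : ℤ) + j)]
      congr 1
      push_cast
      omega
    · congr 1
      push_cast
      omega
  have hPp : Pp t = Pp (t - u) * ∏ k ∈ Finset.Ioc (t - u) t, (1 - Polynomial.X ^ (2 * k)) := by
    rw [Pp, Pp, show Finset.Icc 1 (t) = Finset.Ioc 0 (t) from Finset.Icc_succ_left_eq_Ioc _ _, show Finset.Icc 1 (t - u) = Finset.Ioc 0 (t - u) from Finset.Icc_succ_left_eq_Ioc _ _,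
      Finset.prod_Ioc_consecutive _ (Nat.zero_le _) (by omega : t - u ≤ t)]
  -- the "box times tail" polynomial has delta coefficients up to 2*(t-u)+1
  have hW : ∀ m' ≤ 2 * (t - u) + 1,
      ((gb2 (2 * t) (((t - u : ℕ) : ℤ)) * Pp (t - u))
        * ∏ k ∈ Finset.Ioc (t - u) t, (1 - Polynomial.X ^ (2 * k))).coeff m'
      = if m' = 0 then 1 else 0 := by
    apply coeff_mul_delta
    · intro m' hm'
      have hb := boxU (t - u) (t + u) m' (by omega)
      rw [show (t - u) + (t + u) = 2 * t by omega] at hb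
      exact hb
    · apply coeff_prod_delta
      intro k hk m' hm'
      rw [Finset.mem_Ioc] at hk
      exact coeff_one_sub_Xpow _ _ (by omega)
  have hre : Polynomial.C (sgn j) * gb2 (2 * t) ((t : ℤ) + j) * Polynomial.X ^ (j ^ 2).toNat
        * Pp t
      = Polynomial.C (sgn j) * (((gb2 (2 * t) (((t - u : ℕ) : ℤ)) * Pp (t - u))
          * ∏ k ∈ Finset.Ioc (t - u) t, (1 - Polynomial.X ^ (2 * k)))
        * Polynomial.X ^ (j ^ 2).toNat) := by
    rw [hgb, hPp]
    ring
  rw [hre, Polynomial.coeff_C_mul, Polynomial.coeff_mul_X_pow']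
  have hsq : 2 * u ≤ u ^ 2 + 1 := by nlinarith
  rw [toNat_sq j, ← hu]
  by_cases hle : u ^ 2 ≤ m
  · rw [if_pos hle, hW (m - u ^ 2) (by
      have h2t : m ≤ 2 * t := hm
      omega)]
    by_cases h0 : m = u ^ 2
    · rw [if_pos (by omega : m - u ^ 2 = 0), if_pos h0, mul_one]
    · rw [if_neg (by omega : ¬ m - u ^ 2 = 0), if_neg h0, mul_zero]
  · rw [if_neg hle, if_neg (by omega), mul_zero]

end Theta

section Theta2
open PowerSeries

/-- truncated theta series `∑_{|j| ≤ t} (-1)^j q^{j²}` -/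
noncomputable def Th (t : ℕ) : PowerSeries ℤ :=
  ∑ j ∈ Finset.Icc (-(t : ℤ)) (t : ℤ), PowerSeries.monomial (j ^ 2).toNat (sgn j)

noncomputable def Tpos (t : ℕ) : PowerSeries ℤ :=
  ∑ j ∈ Finset.Icc (1 : ℤ) (t : ℤ), PowerSeries.monomial (j ^ 2).toNat (sgn j)

lemma thetaA (t : ℕ) :
    EqUpTo (2 * t) (((Jt t : Polynomial ℤ) : PowerSeries ℤ)
      * ((Pp t : Polynomial ℤ) : PowerSeries ℤ)) (Th t) := by
  intro m hm
  rw [← Polynomial.coe_mul, Polynomial.coeff_coe, Th, map_sum, Jt, Finset.sum_mul,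
    Polynomial.finset_sum_coeff]
  apply Finset.sum_congr rfl
  intro j hj
  rw [thetaA_term t j hj m hm, PowerSeries.coeff_monomial]

lemma Th_eq (t : ℕ) : Th t = 1 + 2 * Tpos t := by
  induction t with
  | zero =>
      rw [Th, Tpos]
      rw [show ((0 : ℕ) : ℤ) = 0 from rfl, neg_zero, Finset.Icc_self,
        Finset.Icc_eq_empty (by norm_num : ¬ (1 : ℤ) ≤ 0), Finset.sum_singleton,
        Finset.sum_empty]
      rw [show ((0:ℤ) ^ 2).toNat = 0 from rfl, sgn_zero]
      simp
  | succ t ih =>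
      have hb : ((t + 1 : ℕ) : ℤ) = (t : ℤ) + 1 := by push_cast; ring
      have hs1 : Finset.Icc (-((t : ℤ) + 1)) ((t : ℤ) + 1)
          = insert (-((t : ℤ) + 1)) (insert ((t : ℤ) + 1)
              (Finset.Icc (-(t : ℤ)) (t : ℤ))) := by
        ext x
        simp only [Finset.mem_Icc, Finset.mem_insert]
        omega
      have hs2 : Finset.Icc (1 : ℤ) ((t : ℤ) + 1)
          = insert ((t : ℤ) + 1) (Finset.Icc (1 : ℤ) (t : ℤ)) := by
        ext x
        simp only [Finset.mem_Icc, Finset.mem_insert]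
        omega
      rw [Th, Tpos, hb, hs1, hs2,
        Finset.sum_insert (by simp only [Finset.mem_insert, Finset.mem_Icc]; omega),
        Finset.sum_insert (by simp only [Finset.mem_Icc]; omega),
        Finset.sum_insert (by simp only [Finset.mem_Icc]; omega)]
      rw [show (-((t : ℤ) + 1)) ^ 2 = ((t : ℤ) + 1) ^ 2 by ring, sgn_neg]
      rw [← Th, ← Tpos, ih]
      ring

theorem EqUpTo.mono {R : Type*} [Semiring R] {N N' : ℕ} {f g : PowerSeries R}
    (h : EqUpTo N f g) (hN : N' ≤ N) : EqUpTo N' f g :=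
  fun m hm => h m (le_trans hm hN)

theorem EqUpTo.map {R S : Type*} [Semiring R] [Semiring S] (φ : R →+* S) {N : ℕ}
    {f g : PowerSeries R} (h : EqUpTo N f g) :
    EqUpTo N (PowerSeries.map φ f) (PowerSeries.map φ g) := by
  intro m hm
  rw [PowerSeries.coeff_map, PowerSeries.coeff_map, h m hm]

lemma sq_toNat_mod4 (j : ℤ) : (j ^ 2).toNat % 4 = 0 ∨ (j ^ 2).toNat % 4 = 1 := by
  rw [toNat_sq]
  rcases Nat.even_or_odd j.natAbs with ⟨v, hv⟩ | ⟨v, hv⟩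
  · left
    rw [hv, show (v + v) ^ 2 = 4 * v ^ 2 by ring, Nat.mul_mod_right]
  · right
    rw [hv, show (2 * v + 1) ^ 2 = 4 * (v ^ 2 + v) + 1 by ring]
    omega

lemma coeff_Tpos_mod4 (t a : ℕ) (h : (PowerSeries.coeff a) (Tpos t) ≠ 0) :
    a % 4 = 0 ∨ a % 4 = 1 := by
  rw [Tpos, map_sum] at h
  obtain ⟨j, _, hj⟩ := Finset.exists_ne_zero_of_sum_ne_zero h
  rw [PowerSeries.coeff_monomial] at hj
  by_cases he : a = (j ^ 2).toNat
  · rw [he]; exact sq_toNat_mod4 j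
  · rw [if_neg he] at hj; exact absurd rfl hj

end Theta2

section Final
open PowerSeries

local notation "Xz" => (PowerSeries.X : PowerSeries ℤ)

lemma EqUpTo_one_sub_Xpow (N k : ℕ) (hk : N < k) :
    EqUpTo N ((1 : PowerSeries ℤ) - Xz ^ k) 1 := by
  intro m hm
  rw [map_sub, PowerSeries.coeff_X_pow, if_neg (by omega : ¬ m = k), sub_zero]

lemma EqUpTo_Gfac_one (N k : ℕ) (hk : N < k) : EqUpTo N (Gfac k) 1 := by
  have h := (EqUpTo_one_sub_Xpow N k hk).mul (EqUpTo_invf_one (d := 1) (by omega) hk)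
  rw [mul_one] at h
  exact h

lemma F_Gs (M : ℕ) :
    (∏ k ∈ Finset.Icc 1 M, fps k) * Gs (M + 1) = Gfac (M + 1) := by
  rw [Gs, Finset.prod_Icc_succ_top (by omega : 1 ≤ M + 1), ← mul_assoc,
    ← Finset.prod_mul_distrib,
    Finset.prod_congr rfl (fun k hk => fps_mul_Gfac (Finset.mem_Icc.mp hk).1),
    Finset.prod_const_one, one_mul]

theorem pbar_mod8 (n : ℕ) : pbar (4 * n + 3) ≡ 0 [ZMOD 8] := by
  set M : ℕ := 4 * n + 3 with hM
  set t : ℕ := 2 * n + 2 with ht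
  have hMt : M + 1 = 2 * t := by omega
  have h1 : EqUpTo M ((∏ k ∈ Finset.Icc 1 M, fps k) * Gs (M + 1)) 1 := by
    rw [F_Gs M]
    exact EqUpTo_Gfac_one M (M + 1) (by omega)
  have hp1 : ((Jt t : Polynomial ℤ) : PowerSeries ℤ)
      = ∏ k ∈ Finset.Icc 1 t, (1 - Xz ^ (2 * k - 1)) ^ 2 := by
    rw [jtp t, ← Polynomial.coeToPowerSeries.ringHom_apply, map_prod]
    apply Finset.prod_congr rfl
    intro k _
    simp only [Polynomial.coeToPowerSeries.ringHom_apply, Polynomial.coe_pow,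
      Polynomial.coe_sub, Polynomial.coe_one, Polynomial.coe_X]
  have hp2 : ((Pp t : Polynomial ℤ) : PowerSeries ℤ)
      = ∏ k ∈ Finset.Icc 1 t, (1 - Xz ^ (2 * k)) := by
    rw [Pp, ← Polynomial.coeToPowerSeries.ringHom_apply, map_prod]
    apply Finset.prod_congr rfl
    intro k _
    simp only [Polynomial.coeToPowerSeries.ringHom_apply, Polynomial.coe_sub,
      Polynomial.coe_one, Polynomial.coe_X]
    norm_num
  have h2 : EqUpTo M (Gs (M + 1)) (Th t) := by
    rw [hMt, Gs_eq t]
    have hth : EqUpTo M ((∏ k ∈ Finset.Icc 1 t, (1 - Xz ^ (2 * k - 1)) ^ 2)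
        * (∏ k ∈ Finset.Icc 1 t, (1 - Xz ^ (2 * k)))) (Th t) := by
      have h := (thetaA t).mono (by omega : M ≤ 2 * t)
      rwa [hp1, hp2] at h
    have hEt : EqUpTo M (∏ k ∈ Finset.Ioc t (2 * t), invf (-1) (2 * k)) 1 := by
      have h := EqUpTo.prod (N := M) (Finset.Ioc t (2 * t))
        (fun k => invf (-1) (2 * k)) (fun _ => (1 : PowerSeries ℤ))
        (fun k hk => by
          rw [Finset.mem_Ioc] at hk
          exact EqUpTo_invf_one (by omega) (by omega))
      rwa [Finset.prod_const_one] at h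
    have h := hth.mul hEt
    rwa [mul_one] at h
  -- pass to ZMod 8
  have hTh8 : PowerSeries.map (Int.castRingHom (ZMod 8)) (Th t)
      = 1 + 2 * PowerSeries.map (Int.castRingHom (ZMod 8)) (Tpos t) := by
    rw [Th_eq, map_add, map_mul, map_one, map_ofNat]
  set T8 : PowerSeries (ZMod 8) := PowerSeries.map (Int.castRingHom (ZMod 8)) (Tpos t) with hT8
  have h8 : (8 : PowerSeries (ZMod 8)) = 0 := by
    rw [← map_ofNat (PowerSeries.C (R := ZMod 8)) 8, show (8 : ZMod 8) = 0 by decide, map_zero]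
  have hinv : (1 + 2 * T8) * (1 - 2 * T8 + 4 * T8 ^ 2) = 1 := by
    have h : (1 + 2 * T8) * (1 - 2 * T8 + 4 * T8 ^ 2) = 1 + 8 * T8 ^ 3 := by ring
    rw [h, h8, zero_mul, add_zero]
  have hFH : EqUpTo M (PowerSeries.map (Int.castRingHom (ZMod 8))
      (∏ k ∈ Finset.Icc 1 M, fps k)) (1 - 2 * T8 + 4 * T8 ^ 2) := by
    set F8 := PowerSeries.map (Int.castRingHom (ZMod 8)) (∏ k ∈ Finset.Icc 1 M, fps k) with hF8
    set H := (1 : PowerSeries (ZMod 8)) - 2 * T8 + 4 * T8 ^ 2 with hH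
    have k1 : EqUpTo M (F8 * PowerSeries.map (Int.castRingHom (ZMod 8)) (Gs (M + 1))) 1 := by
      have h := h1.map (Int.castRingHom (ZMod 8))
      rwa [map_mul, map_one] at h
    have k2 : EqUpTo M (PowerSeries.map (Int.castRingHom (ZMod 8)) (Gs (M + 1))) (1 + 2 * T8) := by
      have h := h2.map (Int.castRingHom (ZMod 8))
      rwa [hTh8] at h
    intro m hm
    calc PowerSeries.coeff m F8
        = PowerSeries.coeff m (F8 * ((1 + 2 * T8) * H)) := by rw [hinv, mul_one]
      _ = PowerSeries.coeff m ((F8 * (1 + 2 * T8)) * H) := by rw [mul_assoc]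
      _ = PowerSeries.coeff m ((F8 * PowerSeries.map (Int.castRingHom (ZMod 8)) (Gs (M + 1))) * H) :=
          (((EqUpTo.refl F8).mul k2.symm).mul (EqUpTo.refl H)) m hm
      _ = PowerSeries.coeff m (1 * H) := ((k1.mul (EqUpTo.refl H)) m hm)
      _ = PowerSeries.coeff m H := by rw [one_mul]
  have hTM : PowerSeries.coeff M (Tpos t) = 0 := by
    by_contra h
    rcases coeff_Tpos_mod4 t M h with h4 | h4 <;> omega
  have hTM2 : PowerSeries.coeff M (Tpos t * Tpos t) = 0 := by
    rw [PowerSeries.coeff_mul]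
    apply Finset.sum_eq_zero
    rintro ⟨a, b⟩ hab
    rw [Finset.HasAntidiagonal.mem_antidiagonal] at hab
    rcases eq_or_ne (PowerSeries.coeff a (Tpos t)) 0 with h | h
    · rw [h, zero_mul]
    rcases eq_or_ne (PowerSeries.coeff b (Tpos t)) 0 with h' | h'
    · rw [h', mul_zero]
    rcases coeff_Tpos_mod4 t a h with ha | ha <;>
      rcases coeff_Tpos_mod4 t b h' with hb | hb <;> omega
  have hcH : PowerSeries.coeff M (1 - 2 * T8 + 4 * T8 ^ 2) = 0 := by
    have c1 : PowerSeries.coeff M (1 : PowerSeries (ZMod 8)) = 0 := by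
      rw [PowerSeries.coeff_one, if_neg (by omega : ¬ M = 0)]
    have c2 : PowerSeries.coeff M (2 * T8) = 0 := by
      rw [show (2 : PowerSeries (ZMod 8)) = PowerSeries.C (2 : ZMod 8) from (map_ofNat _ 2).symm,
        PowerSeries.coeff_C_mul, hT8, PowerSeries.coeff_map, hTM, map_zero, mul_zero]
    have c3 : PowerSeries.coeff M (4 * T8 ^ 2) = 0 := by
      rw [show (4 : PowerSeries (ZMod 8)) = PowerSeries.C (4 : ZMod 8) from (map_ofNat _ 4).symm,
        PowerSeries.coeff_C_mul, hT8, sq, ← map_mul, PowerSeries.coeff_map, hTM2, map_zero, mul_zero]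
    rw [map_add, map_sub, c1, c2, c3]
    ring
  have final : ((pbar M : ℤ) : ZMod 8) = 0 := by
    have h := hFH M (le_refl M)
    rw [hcH, PowerSeries.coeff_map] at h
    exact h
  have hdvd : (8 : ℤ) ∣ pbar M := by
    exact_mod_cast (ZMod.intCast_zmod_eq_zero_iff_dvd _ 8).mp final
  exact Int.modEq_zero_iff_dvd.mpr hdvd

end Final

end OP

/-- For all `n ≥ 0`, `p̄(4n+3) ≡ 0 (mod 8)`. -/
theorem pbar_four_n_three_mod_eight (n : ℕ) :
    pbar (4 * n + 3) ≡ 0 [ZMOD 8] := by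
  exact OP.pbar_mod8 n
end

section
/- The generating functions for plane overpartitions and for overpartitions into odd parts agree modulo 4: ∏_{n≥1} ((1+q^n)/(1-q^n))^n ≡ ∏_{n≥1} (1+q^(2n-1))/(1-q^(2n-1)) (mod 4), coefficient-wise. -/
open PowerSeries

/-- The number of plane overpartitions of `n`: the coefficient of `q^n` in
`∏_{k≥1} ((1+q^k)/(1-q^k))^k`, truncated at `k = n` (factors with `k > n` do not
affect coefficients up to degree `n`). -/
noncomputable def plbar (n : ℕ) : ℤ :=
  PowerSeries.coeff n (∏ k ∈ Finset.Icc 1 n, fps k ^ k)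

/-- The number of overpartitions of `n` into odd parts: coefficient of `q^n` in
`∏_{k≥1} (1+q^(2k-1))/(1-q^(2k-1))`, truncated at `k = n`. -/
noncomputable def pobar (n : ℕ) : ℤ :=
  PowerSeries.coeff n (∏ k ∈ Finset.Icc 1 n, fps (2 * k - 1))

namespace PlaneOverpartitionAux

lemma cc (k : ℕ) (hk : 1 ≤ k) :
    constantCoeff (1 - (X : PowerSeries ℤ) ^ k) = ((1 : ℤˣ) : ℤ) := by
  simp [Nat.one_le_iff_ne_zero.mp hk]

lemma key (k : ℕ) (hk : 1 ≤ k) :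
    fps k * (1 - (X : PowerSeries ℤ) ^ k) = 1 + (X : PowerSeries ℤ) ^ k := by
  have h := mul_invOfUnit (1 - (X : PowerSeries ℤ) ^ k) 1 (cc k hk)
  rw [fps]
  linear_combination (1 + (X : PowerSeries ℤ) ^ k) * h

lemma fps_sub_one (k : ℕ) (hk : 1 ≤ k) :
    (X : PowerSeries ℤ) ^ k ∣ fps k - 1 := by
  have h := mul_invOfUnit (1 - (X : PowerSeries ℤ) ^ k) 1 (cc k hk)
  refine ⟨2 * PowerSeries.invOfUnit (1 - (X : PowerSeries ℤ) ^ k) 1, ?_⟩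
  rw [fps]
  linear_combination h

noncomputable def F (k : ℕ) : PowerSeries (ZMod 4) :=
  PowerSeries.map (Int.castRingHom (ZMod 4)) (fps k)

lemma F_key (k : ℕ) (hk : 1 ≤ k) :
    F k * (1 - (X : PowerSeries (ZMod 4)) ^ k) = 1 + (X : PowerSeries (ZMod 4)) ^ k := by
  have := congrArg (PowerSeries.map (Int.castRingHom (ZMod 4))) (key k hk)
  simpa [F] using this

lemma four_eq_zero : (4 : PowerSeries (ZMod 4)) = 0 := by
  rw [← map_ofNat (C (R := ZMod 4)) 4, show (4 : ZMod 4) = 0 from rfl, map_zero]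

lemma F_sq (k : ℕ) (hk : 1 ≤ k) : F k ^ 2 = 1 := by
  have hu : IsUnit ((1 - (X : PowerSeries (ZMod 4)) ^ k) ^ 2) := by
    refine (IsUnit.pow 2 ?_)
    rw [PowerSeries.isUnit_iff_constantCoeff]
    simp [Nat.one_le_iff_ne_zero.mp hk]
  apply hu.mul_left_cancel
  have h := F_key k hk
  calc (1 - (X : PowerSeries (ZMod 4)) ^ k) ^ 2 * F k ^ 2
      = (F k * (1 - (X : PowerSeries (ZMod 4)) ^ k)) ^ 2 := by ring
    _ = (1 + (X : PowerSeries (ZMod 4)) ^ k) ^ 2 := by rw [h]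
    _ = (1 - (X : PowerSeries (ZMod 4)) ^ k) ^ 2 * 1 := by
        linear_combination (X : PowerSeries (ZMod 4)) ^ k * four_eq_zero

lemma F_sub_one (k : ℕ) (hk : 1 ≤ k) :
    (X : PowerSeries (ZMod 4)) ^ k ∣ F k - 1 := by
  obtain ⟨g, hg⟩ := fps_sub_one k hk
  refine ⟨PowerSeries.map (Int.castRingHom (ZMod 4)) g, ?_⟩
  have := congrArg (PowerSeries.map (Int.castRingHom (ZMod 4))) hg
  simpa [F] using this

end PlaneOverpartitionAux

namespace PlaneOverpartitionAux

lemma prod_sub_one_dvd {A : Type*} [CommRing A] (c : ℕ) (S : Finset ℕ)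
    (f : ℕ → PowerSeries A) (h : ∀ m ∈ S, (X : PowerSeries A) ^ c ∣ f m - 1) :
    (X : PowerSeries A) ^ c ∣ (∏ m ∈ S, f m) - 1 := by
  classical
  induction S using Finset.induction with
  | empty => simp
  | @insert a s hx ih =>
    rw [Finset.prod_insert hx]
    have h1 := h a (Finset.mem_insert_self a s)
    have h2 := ih (fun m hm => h m (Finset.mem_insert_of_mem hm))
    have heq : f a * (∏ m ∈ s, f m) - 1
        = (f a - 1) * (∏ m ∈ s, f m) + ((∏ m ∈ s, f m) - 1) := by ring
    rw [heq]
    exact dvd_add (h1.mul_right _) h2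

lemma coeff_prod_filter {A : Type*} [CommRing A] (n : ℕ) (S : Finset ℕ)
    (f : ℕ → PowerSeries A) (h : ∀ m ∈ S, (X : PowerSeries A) ^ m ∣ f m - 1) :
    PowerSeries.coeff n (∏ m ∈ S, f m)
      = PowerSeries.coeff n (∏ m ∈ S.filter (· ≤ n), f m) := by
  classical
  have hsplit := (Finset.prod_filter_mul_prod_filter_not S (· ≤ n) f).symm
  have hdvd : (X : PowerSeries A) ^ (n + 1)
      ∣ (∏ m ∈ S.filter (fun m => ¬ m ≤ n), f m) - 1 := by
    refine prod_sub_one_dvd _ _ _ (fun m hm => ?_)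
    simp only [Finset.mem_filter] at hm
    exact dvd_trans (pow_dvd_pow _ (by omega)) (h m hm.1)
  obtain ⟨g, hg⟩ := hdvd
  have hB : (∏ m ∈ S.filter (fun m => ¬ m ≤ n), f m)
      = 1 + (X : PowerSeries A) ^ (n + 1) * g := by linear_combination hg
  rw [hsplit, hB]
  have hexp : (∏ m ∈ S.filter (· ≤ n), f m) * (1 + (X : PowerSeries A) ^ (n + 1) * g)
      = (∏ m ∈ S.filter (· ≤ n), f m)
        + (X : PowerSeries A) ^ (n + 1) * (g * ∏ m ∈ S.filter (· ≤ n), f m) := by ring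
  rw [hexp, map_add]
  have hz : PowerSeries.coeff n
      ((X : PowerSeries A) ^ (n + 1) * (g * ∏ m ∈ S.filter (· ≤ n), f m)) = 0 :=
    (PowerSeries.X_pow_dvd_iff.mp (Dvd.intro _ rfl)) n (Nat.lt_succ_self n)
  rw [hz, add_zero]

lemma F_pow (k : ℕ) (hk : 1 ≤ k) :
    F k ^ k = if k % 2 = 1 then F k else 1 := by
  have h2 := F_sq k hk
  have hk2 : F k ^ k = (F k ^ 2) ^ (k / 2) * F k ^ (k % 2) := by
    rw [← pow_mul, ← pow_add, Nat.div_add_mod]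
  rw [hk2, h2, one_pow, one_mul]
  rcases Nat.mod_two_eq_zero_or_one k with h | h <;> simp [h]

lemma reindex (n : ℕ) :
    (∏ k ∈ Finset.Icc 1 n, F (2 * k - 1))
      = ∏ m ∈ (Finset.Icc 1 (2 * n - 1)).filter (fun m => m % 2 = 1), F m := by
  refine Finset.prod_nbij' (fun k => 2 * k - 1) (fun m => (m + 1) / 2) ?_ ?_ ?_ ?_ ?_
  · intro a ha
    simp only [Finset.mem_Icc, Finset.mem_filter] at *
    omega
  · intro a ha
    simp only [Finset.mem_Icc, Finset.mem_filter] at *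
    omega
  · intro a ha
    simp only [Finset.mem_Icc] at ha
    omega
  · intro a ha
    simp only [Finset.mem_Icc, Finset.mem_filter] at ha
    omega
  · intro a ha
    rfl

end PlaneOverpartitionAux


open PlaneOverpartitionAux in
/-- `∏_{n≥1} ((1+q^n)/(1-q^n))^n ≡ ∏_{n≥1} (1+q^(2n-1))/(1-q^(2n-1)) (mod 4)`
coefficient-wise. -/
theorem plbar_congr_pobar_mod_four (n : ℕ) : plbar n ≡ pobar n [ZMOD 4] := by
  have key : ((plbar n : ZMod 4)) = ((pobar n : ZMod 4)) := by
    have hpl : ((plbar n : ZMod 4)) = PowerSeries.coeff n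
        (PowerSeries.map (Int.castRingHom (ZMod 4)) (∏ k ∈ Finset.Icc 1 n, fps k ^ k)) := by
      rw [PowerSeries.coeff_map]; rfl
    have hpo : ((pobar n : ZMod 4)) = PowerSeries.coeff n
        (PowerSeries.map (Int.castRingHom (ZMod 4)) (∏ k ∈ Finset.Icc 1 n, fps (2 * k - 1))) := by
      rw [PowerSeries.coeff_map]; rfl
    have hmem : ∀ m ∈ (Finset.Icc 1 n).filter (fun m => m % 2 = 1),
        (X : PowerSeries (ZMod 4)) ^ m ∣ F m - 1 := by
      intro m hm
      simp only [Finset.mem_filter, Finset.mem_Icc] at hm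
      exact F_sub_one m hm.1.1
    have hmem2 : ∀ m ∈ (Finset.Icc 1 (2 * n - 1)).filter (fun m => m % 2 = 1),
        (X : PowerSeries (ZMod 4)) ^ m ∣ F m - 1 := by
      intro m hm
      simp only [Finset.mem_filter, Finset.mem_Icc] at hm
      exact F_sub_one m hm.1.1
    calc ((plbar n : ZMod 4))
        = PowerSeries.coeff n (∏ k ∈ Finset.Icc 1 n, F k ^ k) := by
          rw [hpl, map_prod]; simp only [map_pow, F]
      _ = PowerSeries.coeff n
            (∏ k ∈ Finset.Icc 1 n, if k % 2 = 1 then F k else 1) := by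
          congr 1
          exact Finset.prod_congr rfl fun k hk => F_pow k (Finset.mem_Icc.mp hk).1
      _ = PowerSeries.coeff n
            (∏ m ∈ (Finset.Icc 1 n).filter (fun m => m % 2 = 1), F m) := by
          rw [Finset.prod_filter]
      _ = PowerSeries.coeff n
            (∏ m ∈ ((Finset.Icc 1 n).filter (fun m => m % 2 = 1)).filter (· ≤ n), F m) :=
          coeff_prod_filter n _ F hmem
      _ = PowerSeries.coeff n
            (∏ m ∈ ((Finset.Icc 1 (2 * n - 1)).filter (fun m => m % 2 = 1)).filter (· ≤ n),
              F m) := by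
          congr 2
          ext m
          simp only [Finset.mem_filter, Finset.mem_Icc]
          omega
      _ = PowerSeries.coeff n
            (∏ m ∈ (Finset.Icc 1 (2 * n - 1)).filter (fun m => m % 2 = 1), F m) :=
          (coeff_prod_filter n _ F hmem2).symm
      _ = PowerSeries.coeff n (∏ k ∈ Finset.Icc 1 n, F (2 * k - 1)) := by
          rw [reindex]
      _ = ((pobar n : ZMod 4)) := by
          rw [hpo]
          congr 1
          rw [map_prod]
          rfl
  exact (ZMod.intCast_eq_intCast_iff _ _ _).mp key
end

section
/- For every integer n ≥ 1, the number of plane overpartitions pl̄(n) satisfies: pl̄(n) ≡ 2 (mod 4) if n is a perfect square or twice a perfect square, and pl̄(n) ≡ 0 (mod 4) otherwise. -/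
open PowerSeries

open scoped Classical

/- ### Auxiliary number-theoretic lemmas -/

lemma aux_odd_prod (s : Finset ℕ) (f : ℕ → ℕ) :
    Odd (∏ i ∈ s, f i) ↔ ∀ i ∈ s, Odd (f i) := by
  induction s using Finset.cons_induction with
  | empty => simp
  | cons a s ha ih => rw [Finset.prod_cons, Nat.odd_mul, ih, Finset.forall_mem_cons]

lemma aux_isSquare_iff_even_factorization (n : ℕ) (hn : n ≠ 0) :
    IsSquare n ↔ ∀ p, Even (n.factorization p) := by
  constructor
  · rintro ⟨r, rfl⟩ p
    rw [← sq, Nat.factorization_pow]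
    simp
  · intro h
    refine ⟨n.factorization.prod (fun p e => p ^ (e / 2)), ?_⟩
    simp only [Finsupp.prod]
    rw [← Finset.prod_mul_distrib]
    conv_lhs => rw [← Nat.factorization_prod_pow_eq_self hn]
    simp only [Finsupp.prod]
    refine Finset.prod_congr rfl fun p hp => ?_
    rw [← pow_add]
    congr 1
    have := (h p).two_dvd
    omega

lemma aux_odd_card_divisors_iff (n : ℕ) (hn : n ≠ 0) :
    Odd n.divisors.card ↔ IsSquare n := by
  rw [Nat.card_divisors hn, aux_odd_prod, aux_isSquare_iff_even_factorization n hn]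
  constructor
  · intro h p
    by_cases hp : p ∈ n.primeFactors
    · have := h p hp
      rw [Nat.odd_iff] at this; rw [Nat.even_iff]; omega
    · have : n.factorization p = 0 := by
        rwa [← Finsupp.notMem_support_iff, Nat.support_factorization]
      simp [this]
  · intro h p hp
    have := h p
    rw [Nat.even_iff] at this; rw [Nat.odd_iff]; omega

lemma aux_filter_odd_dvd_eq (n : ℕ) (hn : 1 ≤ n) :
    ((Finset.Icc 1 n).filter fun k => Odd k ∧ k ∣ n) = (ordCompl[2] n).divisors := by
  have hn0 : n ≠ 0 := by omega
  have hs0 : ordCompl[2] n ≠ 0 := (Nat.ordCompl_pos 2 hn0).ne'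
  ext k
  simp only [Finset.mem_filter, Finset.mem_Icc, Nat.mem_divisors]
  constructor
  · rintro ⟨⟨h1, h2⟩, hodd, hdvd⟩
    refine ⟨?_, hs0⟩
    have hcop : Nat.Coprime k (2 ^ n.factorization 2) := by
      apply Nat.Coprime.pow_right
      rw [Nat.coprime_comm, Nat.Prime.coprime_iff_not_dvd Nat.prime_two, ← even_iff_two_dvd]
      exact (Nat.not_even_iff_odd.mpr hodd)
    exact hcop.dvd_of_dvd_mul_left (by rw [Nat.ordProj_mul_ordCompl_eq_self]; exact hdvd)
  · rintro ⟨hdvd, -⟩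
    have hk0 : k ≠ 0 := by rintro rfl; exact hs0 (Nat.eq_zero_of_zero_dvd hdvd)
    have hkn : k ∣ n := hdvd.trans (Nat.ordCompl_dvd n 2)
    refine ⟨⟨by omega, Nat.le_of_dvd (by omega) hkn⟩, ?_, hkn⟩
    have hsodd : Odd (ordCompl[2] n) := by
      rw [Nat.odd_iff, ← Nat.not_even_iff, even_iff_two_dvd]
      exact Nat.not_dvd_ordCompl (by norm_num) hn0
    rw [Nat.odd_iff, ← Nat.not_even_iff, even_iff_two_dvd] at hsodd ⊢
    exact fun h => hsodd (h.trans hdvd)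

lemma aux_ordCompl_square_iff (n : ℕ) (hn : n ≠ 0) :
    IsSquare (ordCompl[2] n) ↔ (IsSquare n ∨ ∃ m, n = 2 * m ^ 2) := by
  set a := n.factorization 2 with ha
  have ha' : n.factorization 2 = a := rfl
  constructor
  · rintro ⟨t, ht⟩
    have hself := (Nat.ordProj_mul_ordCompl_eq_self n 2)
    rcases Nat.even_or_odd a with he | ho
    · left
      obtain ⟨b, hb⟩ := he
      refine ⟨2 ^ b * t, ?_⟩
      rw [← hself, ha', ht, hb]
      ring
    · right
      obtain ⟨b, hb⟩ := ho
      refine ⟨2 ^ b * t, ?_⟩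
      rw [← hself, ha', ht, hb]
      ring
  · rintro (⟨m, rfl⟩ | ⟨m, rfl⟩)
    · have hm : m ≠ 0 := by rintro rfl; simp at hn
      refine ⟨ordCompl[2] m, ?_⟩
      rw [← Nat.ordCompl_mul]
    · have hm : m ≠ 0 := by rintro rfl; simp at hn
      have h1 : ordCompl[2] (2 * m ^ 2) = ordCompl[2] 2 * ordCompl[2] (m * m) := by
        rw [← Nat.ordCompl_mul, sq]
      rw [h1, Nat.ordCompl_mul]
      have h2 : ordCompl[2] 2 = 1 := by
        have : (2:ℕ).factorization 2 = 1 := Nat.Prime.factorization_self Nat.prime_two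
        simp [this]
      rw [h2, one_mul]
      exact ⟨ordCompl[2] m, rfl⟩

/- ### Power series mod 4 -/

/-- The geometric series `1/(1-X^k)` over `ZMod 4`. -/
noncomputable def auxS (k : ℕ) : PowerSeries (ZMod 4) :=
  PowerSeries.mk fun m => if k ∣ m then 1 else 0

lemma auxS_mul (k : ℕ) (hk : 1 ≤ k) :
    (1 - (X : PowerSeries (ZMod 4)) ^ k) * auxS k = 1 := by
  ext n
  rw [sub_mul, one_mul, map_sub, coeff_X_pow_mul', coeff_one]
  rcases Nat.eq_zero_or_pos n with rfl | hn
  · simp only [auxS, coeff_mk, Nat.dvd_zero, if_pos rfl, if_neg (by omega : ¬ k ≤ 0),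
      if_pos trivial]
    simp
  · rw [if_neg (by omega : ¬ n = 0)]
    by_cases hkn : k ≤ n
    · rw [if_pos hkn]
      simp only [auxS, coeff_mk]
      have : k ∣ n ↔ k ∣ n - k := by
        constructor
        · intro h; exact (Nat.dvd_sub h dvd_rfl)
        · intro h; have := Nat.dvd_add h (dvd_refl k); rwa [Nat.sub_add_cancel hkn] at this
      rw [if_congr this rfl rfl, sub_self]
    · rw [if_neg hkn]
      simp only [auxS, coeff_mk]
      have : ¬ k ∣ n := fun h => hkn (Nat.le_of_dvd hn h)
      simp [this]

lemma aux_two_mul_two : (2 : PowerSeries (ZMod 4)) * 2 = 0 := by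
  have h2 : (2 : PowerSeries (ZMod 4)) = PowerSeries.C 2 := (map_ofNat _ 2).symm
  rw [h2, ← map_mul, show (2 * 2 : ZMod 4) = 0 by decide, map_zero]

lemma aux_map_fps (k : ℕ) (hk : 1 ≤ k) :
    PowerSeries.map (Int.castRingHom (ZMod 4)) (fps k)
      = 1 + 2 * ((X : PowerSeries (ZMod 4)) ^ k * auxS k) := by
  have hc : PowerSeries.constantCoeff (1 - X ^ k) = ((1 : ℤˣ) : ℤ) := by
    have hk0 : k ≠ 0 := by omega
    simp [zero_pow hk0]
  have hmul : (1 - (X : PowerSeries ℤ) ^ k) * PowerSeries.invOfUnit (1 - X ^ k) 1 = 1 :=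
    PowerSeries.mul_invOfUnit _ 1 hc
  set V : PowerSeries (ZMod 4) :=
    PowerSeries.map (Int.castRingHom (ZMod 4)) (PowerSeries.invOfUnit (1 - X ^ k) 1) with hV
  have hVmul : (1 - (X : PowerSeries (ZMod 4)) ^ k) * V = 1 := by
    have := congrArg (PowerSeries.map (Int.castRingHom (ZMod 4))) hmul
    simpa [map_mul, map_sub, map_pow] using this
  have hVS : V = auxS k := by
    calc V = V * ((1 - X ^ k) * auxS k) := by rw [auxS_mul k hk, mul_one]
    _ = ((1 - X ^ k) * V) * auxS k := by ring
    _ = auxS k := by rw [hVmul, one_mul]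
  have : PowerSeries.map (Int.castRingHom (ZMod 4)) (fps k)
      = (1 + (X : PowerSeries (ZMod 4)) ^ k) * V := by
    simp [fps, map_mul, map_add, map_pow, hV]
  rw [this, hVS]
  have expand : (1 + (X : PowerSeries (ZMod 4)) ^ k) * auxS k
      = (1 - X ^ k) * auxS k + 2 * (X ^ k * auxS k) := by ring
  rw [expand, auxS_mul k hk]

lemma aux_sq_one (a : PowerSeries (ZMod 4)) : (1 + 2 * a) ^ 2 = 1 := by
  linear_combination (a + a ^ 2) * aux_two_mul_two

lemma aux_pow_odd (a : PowerSeries (ZMod 4)) {k : ℕ} (hk : Odd k) :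
    (1 + 2 * a) ^ k = 1 + 2 * a := by
  obtain ⟨m, rfl⟩ := hk
  rw [pow_add, pow_mul, aux_sq_one, one_pow, one_mul, pow_one]

lemma aux_pow_even (a : PowerSeries (ZMod 4)) {k : ℕ} (hk : Even k) :
    (1 + 2 * a) ^ k = 1 := by
  obtain ⟨m, rfl⟩ := hk
  rw [← two_mul, pow_mul, aux_sq_one, one_pow]

lemma aux_prod (T : Finset ℕ) (f : ℕ → PowerSeries (ZMod 4)) :
    ∏ k ∈ T, (1 + 2 * f k) = 1 + 2 * ∑ k ∈ T, f k := by
  induction T using Finset.cons_induction with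
  | empty => simp
  | cons a s ha ih =>
    rw [Finset.prod_cons, ih, Finset.sum_cons]
    linear_combination (f a * ∑ k ∈ s, f k) * aux_two_mul_two

/-- For `n ≥ 1`, `pl̄(n) ≡ 2 (mod 4)` if `n` is a square or twice a square, and
`pl̄(n) ≡ 0 (mod 4)` otherwise. -/
theorem plbar_mod_four (n : ℕ) (hn : 1 ≤ n) :
    plbar n ≡ (if IsSquare n ∨ (∃ m, n = 2 * m ^ 2) then 2 else 0) [ZMOD 4] := by
  have hn0 : n ≠ 0 := by omega
  have goal_iff := ZMod.intCast_eq_intCast_iff (plbar n)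
    (if IsSquare n ∨ (∃ m, n = 2 * m ^ 2) then 2 else 0) 4
  rw [show ((4:ℕ):ℤ) = (4:ℤ) by norm_num] at goal_iff
  rw [← goal_iff]
  -- compute the left side in `ZMod 4`
  have key : ((plbar n : ℤ) : ZMod 4)
      = 2 * (((Finset.Icc 1 n).filter fun k => Odd k ∧ k ∣ n).card : ZMod 4) := by
    have h1 : ((plbar n : ℤ) : ZMod 4)
        = PowerSeries.coeff n
            (PowerSeries.map (Int.castRingHom (ZMod 4)) (∏ k ∈ Finset.Icc 1 n, fps k ^ k)) := by
      rw [PowerSeries.coeff_map]; rfl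
    rw [h1, map_prod]
    have h2 : ∀ k ∈ Finset.Icc 1 n,
        PowerSeries.map (Int.castRingHom (ZMod 4)) (fps k ^ k)
          = if Odd k then 1 + 2 * ((X : PowerSeries (ZMod 4)) ^ k * auxS k) else 1 := by
      intro k hk
      rw [Finset.mem_Icc] at hk
      rw [map_pow, aux_map_fps k hk.1]
      by_cases hodd : Odd k
      · rw [if_pos hodd, aux_pow_odd _ hodd]
      · rw [if_neg hodd, aux_pow_even _ (Nat.not_odd_iff_even.mp hodd)]
    rw [Finset.prod_congr rfl h2, ← Finset.prod_filter, aux_prod]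
    rw [map_add, PowerSeries.coeff_one, if_neg hn0]
    have h2C : (2 : PowerSeries (ZMod 4)) = PowerSeries.C 2 := (map_ofNat _ 2).symm
    rw [h2C, PowerSeries.coeff_C_mul, map_sum, zero_add]
    have h3 : ∀ k ∈ (Finset.Icc 1 n).filter (fun k => Odd k),
        PowerSeries.coeff n ((X : PowerSeries (ZMod 4)) ^ k * auxS k)
          = if k ∣ n then 1 else 0 := by
      intro k hk
      rw [Finset.mem_filter, Finset.mem_Icc] at hk
      obtain ⟨⟨hk1, hkn⟩, -⟩ := hk
      rw [PowerSeries.coeff_X_pow_mul', if_pos hkn]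
      simp only [auxS, PowerSeries.coeff_mk]
      have hiff : k ∣ n - k ↔ k ∣ n := by
        constructor
        · intro h; have := Nat.dvd_add h (dvd_refl k); rwa [Nat.sub_add_cancel hkn] at this
        · intro h; exact Nat.dvd_sub h dvd_rfl
      rw [if_congr hiff rfl rfl]
    rw [Finset.sum_congr rfl h3, Finset.sum_boole, Finset.filter_filter]
  rw [key, aux_filter_odd_dvd_eq n hn]
  by_cases hsq : IsSquare n ∨ (∃ m, n = 2 * m ^ 2)
  · rw [if_pos hsq]
    have hodd : Odd (ordCompl[2] n).divisors.card := by
      rw [aux_odd_card_divisors_iff _ (Nat.ordCompl_pos 2 hn0).ne', aux_ordCompl_square_iff n hn0]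
      exact hsq
    obtain ⟨q, hq⟩ := hodd
    rw [hq]
    push_cast
    have h40 : (4 : ZMod 4) = 0 := by decide
    linear_combination (q : ZMod 4) * h40
  · rw [if_neg hsq]
    have heven : Even (ordCompl[2] n).divisors.card := by
      rw [Nat.even_iff, ← Nat.not_odd_iff]
      rw [aux_odd_card_divisors_iff _ (Nat.ordCompl_pos 2 hn0).ne', aux_ordCompl_square_iff n hn0]
      exact hsq
    obtain ⟨q, hq⟩ := heven
    rw [hq]
    push_cast
    have h40 : (4 : ZMod 4) = 0 := by decide
    linear_combination (q : ZMod 4) * h40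
end

section
/- For all integers n ≥ 1, pl̄_6(15n) ≡ 2 (mod 4) and pl̄_6(15n+3) ≡ 0 (mod 4) and pl̄_6(15n+5) ≡ 0 (mod 4), where pl̄_6 counts plane overpartitions with at most 6 rows. -/
open PowerSeries

/-- The number of plane overpartitions of `n` with at most `K` rows: the coefficient
of `q^n` in `∏_{k≥1} ((1+q^k)/(1-q^k))^(min K k)`, truncated at `k = n`. -/
noncomputable def plbark (K n : ℕ) : ℤ :=
  PowerSeries.coeff n (∏ k ∈ Finset.Icc 1 n, fps k ^ min K k)

namespace PlbarAux

/-- The geometric series `1/(1-q^k)` over `ZMod 4`. -/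
noncomputable def E (k : ℕ) : PowerSeries (ZMod 4) :=
  PowerSeries.mk fun j => if k ∣ j then 1 else 0

lemma E_mul (k : ℕ) (hk : 1 ≤ k) : E k * (1 - X ^ k) = 1 := by
  ext m
  rw [mul_sub, mul_one, map_sub, PowerSeries.coeff_mul_X_pow']
  simp only [E, coeff_mk, coeff_one]
  by_cases hkm : k ≤ m
  · have hm0 : m ≠ 0 := by omega
    have hiff : k ∣ m ↔ k ∣ m - k := by
      constructor
      · intro h; exact Nat.dvd_sub h dvd_rfl
      · intro h
        have hmm : m = m - k + k := by omega
        rw [hmm]; exact Nat.dvd_add h dvd_rfl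
    rw [if_pos hkm, if_neg hm0, if_congr hiff rfl rfl, sub_self]
  · by_cases hm0 : m = 0
    · subst hm0; simp [hkm]
    · have hnd : ¬ k ∣ m := fun h => hkm (Nat.le_of_dvd (Nat.pos_of_ne_zero hm0) h)
      simp [hkm, hm0, hnd]

lemma one_sub_mul_E (k : ℕ) (hk : 1 ≤ k) : (1 - X ^ k) * E k = 1 := by
  rw [mul_comm]; exact E_mul k hk

lemma h4 : (4 : PowerSeries (ZMod 4)) = 0 := by
  rw [← map_ofNat (C : ZMod 4 →+* PowerSeries (ZMod 4)) 4, show (4 : ZMod 4) = 0 by decide, map_zero]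

noncomputable def g (k : ℕ) : PowerSeries (ZMod 4) :=
  (fps k).map (Int.castRingHom (ZMod 4))

lemma g_eq (k : ℕ) (hk : 1 ≤ k) : g k = 1 + 2 * (X ^ k * E k) := by
  have hc : (constantCoeff : PowerSeries ℤ →+* ℤ) (1 - X ^ k) = ((1 : ℤˣ) : ℤ) := by
    simp [zero_pow (by omega : k ≠ 0)]
  have hz : (1 - X ^ k : PowerSeries ℤ) * PowerSeries.invOfUnit (1 - X ^ k) 1 = 1 :=
    PowerSeries.mul_invOfUnit _ 1 hc
  have hmap : (1 - X ^ k : PowerSeries (ZMod 4)) *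
      (PowerSeries.invOfUnit (1 - (X : PowerSeries ℤ) ^ k) 1).map (Int.castRingHom (ZMod 4)) = 1 := by
    have := congrArg (PowerSeries.map (Int.castRingHom (ZMod 4))) hz
    simpa [map_mul, map_sub, map_pow] using this
  set e : PowerSeries (ZMod 4) :=
    (PowerSeries.invOfUnit (1 - (X : PowerSeries ℤ) ^ k) 1).map (Int.castRingHom (ZMod 4)) with he
  have heE : e = E k := by
    calc e = 1 * e := (one_mul _).symm
      _ = (E k * (1 - X ^ k)) * e := by rw [E_mul k hk]
      _ = E k * ((1 - X ^ k) * e) := by ring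
      _ = E k := by rw [hmap, mul_one]
  have hg1 : g k = (1 + X ^ k) * e := by
    simp [g, fps, he, map_mul, map_add, map_pow]
  rw [hg1, heE]
  have : (1 + X ^ k : PowerSeries (ZMod 4)) * E k
      = (1 - X ^ k) * E k + 2 * (X ^ k * E k) := by ring
  rw [this, one_sub_mul_E k hk]

lemma g_sq (k : ℕ) (hk : 1 ≤ k) : g k ^ 2 = 1 := by
  rw [g_eq k hk]
  linear_combination (X ^ k * E k + (X ^ k * E k) ^ 2) * h4

lemma coeff_main (m : ℕ) (hm : 15 ≤ m) :
    ((plbark 6 m : ℤ) : ZMod 4) =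
      2 + 2 * (if (3 : ℕ) ∣ m then (1 : ZMod 4) else 0)
        + 2 * (if (5 : ℕ) ∣ m then (1 : ZMod 4) else 0) := by
  have hcast : ((plbark 6 m : ℤ) : ZMod 4) =
      PowerSeries.coeff m
        ((∏ k ∈ Finset.Icc 1 m, fps k ^ min 6 k).map (Int.castRingHom (ZMod 4))) := by
    rw [PowerSeries.coeff_map]; rfl
  rw [hcast]
  have hmapprod : (∏ k ∈ Finset.Icc 1 m, fps k ^ min 6 k).map (Int.castRingHom (ZMod 4))
      = ∏ k ∈ Finset.Icc 1 m, g k ^ min 6 k := by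
    simp [g, map_prod, map_pow]
  rw [hmapprod]
  have hpow : ∀ k ∈ Finset.Icc 1 m, g k ^ min 6 k = g k ^ (min 6 k % 2) := by
    intro k hk
    have hk1 : 1 ≤ k := (Finset.mem_Icc.mp hk).1
    conv_lhs => rw [show min 6 k = 2 * (min 6 k / 2) + min 6 k % 2 from (Nat.div_add_mod _ 2).symm]
    rw [pow_add, pow_mul, g_sq k hk1, one_pow, one_mul]
  rw [Finset.prod_congr rfl hpow]
  have hsub : ({1, 3, 5} : Finset ℕ) ⊆ Finset.Icc 1 m := by
    intro x hx
    fin_cases hx <;> simp <;> omega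
  have hout : ∀ x ∈ Finset.Icc 1 m, x ∉ ({1, 3, 5} : Finset ℕ) →
      g x ^ (min 6 x % 2) = 1 := by
    intro x hx hxs
    simp only [Finset.mem_insert, Finset.mem_singleton] at hxs
    push_neg at hxs
    have : min 6 x % 2 = 0 := by omega
    rw [this, pow_zero]
  rw [← Finset.prod_subset hsub hout]
  have hprod : ∏ k ∈ ({1, 3, 5} : Finset ℕ), g k ^ (min 6 k % 2)
      = g 1 * g 3 * g 5 := by
    rw [Finset.prod_insert (by decide), Finset.prod_insert (by decide),
      Finset.prod_singleton]
    norm_num [mul_assoc]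
  rw [hprod, g_eq 1 (by norm_num), g_eq 3 (by norm_num), g_eq 5 (by norm_num)]
  have hexp : (1 + 2 * (X ^ 1 * E 1)) * (1 + 2 * (X ^ 3 * E 3)) * (1 + 2 * (X ^ 5 * E 5))
      = 1 + 2 * (X ^ 1 * E 1) + 2 * (X ^ 3 * E 3) + 2 * (X ^ 5 * E 5) := by
    linear_combination (X ^ 1 * E 1 * (X ^ 3 * E 3) + X ^ 1 * E 1 * (X ^ 5 * E 5)
      + X ^ 3 * E 3 * (X ^ 5 * E 5) + 2 * (X ^ 1 * E 1) * (X ^ 3 * E 3) * (X ^ 5 * E 5)) * h4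
  rw [hexp]
  have h2C : (2 : PowerSeries (ZMod 4)) = C (2 : ZMod 4) := by
    rw [← map_ofNat (C : ZMod 4 →+* PowerSeries (ZMod 4)) 2]
  have hco : ∀ k : ℕ, 1 ≤ k → k ≤ m →
      PowerSeries.coeff m (X ^ k * E k) = if k ∣ m then 1 else 0 := by
    intro k hk1 hkm
    rw [mul_comm, PowerSeries.coeff_mul_X_pow', if_pos hkm]
    simp only [E, coeff_mk]
    have hiff : k ∣ m - k ↔ k ∣ m := by
      constructor
      · intro h
        have hmm : m = m - k + k := by omega
        rw [hmm]; exact Nat.dvd_add h dvd_rfl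
      · intro h; exact Nat.dvd_sub h dvd_rfl
    rw [if_congr hiff rfl rfl]
  rw [map_add, map_add, map_add, h2C, PowerSeries.coeff_C_mul, PowerSeries.coeff_C_mul,
    PowerSeries.coeff_C_mul, hco 1 (by norm_num) (by omega), hco 3 (by norm_num) (by omega),
    hco 5 (by norm_num) (by omega), PowerSeries.coeff_one, if_neg (by omega : m ≠ 0),
    if_pos (one_dvd m)]
  ring

end PlbarAux

/-- For all `n ≥ 1`, `pl̄₆(15n) ≡ 2`, `pl̄₆(15n+3) ≡ 0`, and
`pl̄₆(15n+5) ≡ 0 (mod 4)`. -/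
theorem plbark_six_mod_four (n : ℕ) (hn : 1 ≤ n) :
    plbark 6 (15 * n) ≡ 2 [ZMOD 4] ∧
      plbark 6 (15 * n + 3) ≡ 0 [ZMOD 4] ∧
      plbark 6 (15 * n + 5) ≡ 0 [ZMOD 4] := by
  refine ⟨?_, ?_, ?_⟩
  · have h := PlbarAux.coeff_main (15 * n) (by omega)
    rw [if_pos ⟨5 * n, by ring⟩, if_pos ⟨3 * n, by ring⟩] at h
    have : ((plbark 6 (15 * n) : ℤ) : ZMod 4) = ((2 : ℤ) : ZMod 4) := by
      rw [h]; decide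
    exact (ZMod.intCast_eq_intCast_iff _ _ _).mp this
  · have h := PlbarAux.coeff_main (15 * n + 3) (by omega)
    rw [if_pos ⟨5 * n + 1, by ring⟩, if_neg (by omega : ¬ (5 : ℕ) ∣ 15 * n + 3)] at h
    have : ((plbark 6 (15 * n + 3) : ℤ) : ZMod 4) = ((0 : ℤ) : ZMod 4) := by
      rw [h]; decide
    exact (ZMod.intCast_eq_intCast_iff _ _ _).mp this
  · have h := PlbarAux.coeff_main (15 * n + 5) (by omega)
    rw [if_neg (by omega : ¬ (3 : ℕ) ∣ 15 * n + 5), if_pos ⟨3 * n + 1, by ring⟩] at h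
    have : ((plbark 6 (15 * n + 5) : ℤ) : ZMod 4) = ((0 : ℤ) : ZMod 4) := by
      rw [h]; decide
    exact (ZMod.intCast_eq_intCast_iff _ _ _).mp this
end
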